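/- arXiv:2105.03006 — 7 statements merged into one kernel-verified Lean document; each statement's English description precedes it below -/
import Mathlib

section
/- RM satisfies the donation postulate: if W is a simple voting game on [n] and Ŵ is the game obtained when player j donates its vote to player i, then the Recursive Measure of player i in Ŵ satisfies R̂M_i ≥ max( RM_i, RM_j ), where RM denotes the Recursive Measure in W. -/
open Finset

variable {α : Type*} [Fintype α] [DecidableEq α]

/-- A simple voting game on the player set `α`: a monotone collection of winning
coalitions in which the empty coalition loses and the full coalition wins. -/
def SimpleVotingGame (W : Finset (Finset α)) : Prop :=
  (∀ S T : Finset α, S ∈ W → S ⊆ T → T ∈ W) ∧ (∅ : Finset α) ∉ W ∧ (univ : Finset α) ∈ W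

/-- Player `i` is YES-decisive in the division `S`. -/
def YesDecisive (W : Finset (Finset α)) (i : α) (S : Finset α) : Prop :=
  i ∈ S ∧ S ∈ W ∧ S.erase i ∉ W

/-- Player `i` is NO-decisive in the division `S`. -/
def NoDecisive (W : Finset (Finset α)) (i : α) (S : Finset α) : Prop :=
  i ∉ S ∧ S ∉ W ∧ insert i S ∈ W

/-- The loyal children of a winning division `S`: the winning divisions `S \ {k}`, `k ∈ S`. -/
def LCwin (W : Finset (Finset α)) (S : Finset α) : Finset (Finset α) :=
  (S.image fun k => S.erase k).filter (· ∈ W)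

/-- The loyal children of a losing division `S`: the losing divisions `S ∪ {k}`, `k ∉ S`. -/
def LCloss (W : Finset (Finset α)) (S : Finset α) : Finset (Finset α) :=
  (Sᶜ.image fun k => insert k S).filter (· ∉ W)

/-- The YES-efficacy score `α⁺_i(S)`: `1` if `i` is YES-decisive in `S`, `0` if `S` is
losing or `i ∉ S`, and otherwise the arithmetic mean of `α⁺_i` over the loyal children. -/
noncomputable def alphaPlus (W : Finset (Finset α)) (i : α) (S : Finset α) : ℝ :=
  if i ∈ S ∧ S ∈ W ∧ S.erase i ∉ W then 1
  else if S ∉ W ∨ i ∉ S then 0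
  else (∑ T ∈ (LCwin W S).attach, alphaPlus W i T.1) / (LCwin W S).card
termination_by S.card
decreasing_by
  obtain ⟨T, hT⟩ := T
  simp only [LCwin, Finset.mem_filter, Finset.mem_image] at hT
  obtain ⟨⟨k, hk, rfl⟩, -⟩ := hT
  simpa using Finset.card_erase_lt_of_mem hk

/-- The NO-efficacy score `α⁻_i(S)`: `1` if `i` is NO-decisive in `S`, `0` if `S` is
winning or `i ∈ S`, and otherwise the arithmetic mean of `α⁻_i` over the loyal children. -/
noncomputable def alphaMinus (W : Finset (Finset α)) (i : α) (S : Finset α) : ℝ :=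
  if i ∉ S ∧ S ∉ W ∧ insert i S ∈ W then 1
  else if S ∈ W ∨ i ∈ S then 0
  else (∑ T ∈ (LCloss W S).attach, alphaMinus W i T.1) / (LCloss W S).card
termination_by Sᶜ.card
decreasing_by
  obtain ⟨T, hT⟩ := T
  simp only [LCloss, Finset.mem_filter, Finset.mem_image] at hT
  obtain ⟨⟨k, hk, rfl⟩, -⟩ := hT
  rw [Finset.compl_insert]
  exact Finset.card_erase_lt_of_mem hk

/-- The efficacy score `α_i(S) = α⁺_i(S) + α⁻_i(S)`. -/
noncomputable def alphaScore (W : Finset (Finset α)) (i : α) (S : Finset α) : ℝ :=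
  alphaPlus W i S + alphaMinus W i S

/-- The Recursive Measure of YES-voting power (a priori, equiprobable divisions). -/
noncomputable def RMplus (W : Finset (Finset α)) (i : α) : ℝ :=
  (1 / 2 ^ Fintype.card α) * ∑ S : Finset α, alphaPlus W i S

/-- The Recursive Measure of NO-voting power (a priori, equiprobable divisions). -/
noncomputable def RMminus (W : Finset (Finset α)) (i : α) : ℝ :=
  (1 / 2 ^ Fintype.card α) * ∑ S : Finset α, alphaMinus W i S

/-- The Recursive Measure of voting power of player `i` (a priori):
`RM_i = 2^{-m} · Σ_S α_i(S)` where `m` is the number of players. -/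
noncomputable def RM (W : Finset (Finset α)) (i : α) : ℝ :=
  (1 / 2 ^ Fintype.card α) * ∑ S : Finset α, alphaScore W i S

/-- `d` is a dummy voter: `d` is decisive in no division. -/
def IsDummy (W : Finset (Finset α)) (d : α) : Prop :=
  ∀ S : Finset α, d ∉ S → (insert d S ∈ W ↔ S ∈ W)

/-- Player `j` weakly dominates player `i`. -/
def WeaklyDominates (W : Finset (Finset α)) (j i : α) : Prop :=
  ∀ S : Finset α, i ∉ S → j ∉ S → insert i S ∈ W → insert j S ∈ W

/-- `What` is the game obtained from `W` by player `j` donating its vote to player `i`. -/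
def Donation (W What : Finset (Finset α)) (i j : α) : Prop :=
  ∀ S : Finset α, i ∉ S → j ∉ S →
    (insert i (insert j S) ∈ What ↔ insert i (insert j S) ∈ W) ∧
    (insert i S ∈ What ↔ insert i (insert j S) ∈ W) ∧
    (insert j S ∈ What ↔ S ∈ W) ∧
    (S ∈ What ↔ S ∈ W)

/-- `What` is obtained from `W` by inducing a (weak, symmetric) quarrel between `i` and `j`. -/
def Quarrel (W What : Finset (Finset α)) (i j : α) : Prop :=
  ∀ S : Finset α, i ∉ S → j ∉ S →
    (insert i (insert j S) ∈ What ↔ (insert i S ∈ W ∨ insert j S ∈ W)) ∧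
    (S ∈ What ↔ (insert i S ∈ W ∧ insert j S ∈ W)) ∧
    (insert i S ∈ What ↔ insert i S ∈ W) ∧
    (insert j S ∈ What ↔ insert j S ∈ W)

/-- The voting-independent (product) probability of a division `S`, given the
individual YES-vote probabilities `p`. -/
noncomputable def prodDist (p : α → ℝ) (S : Finset α) : ℝ :=
  (∏ k ∈ S, p k) * ∏ k ∈ Sᶜ, (1 - p k)

/-- The generalized Recursive Measure of YES-voting power under a
voting-independent probability distribution with vote probabilities `p`. -/
noncomputable def RMplusP (W : Finset (Finset α)) (p : α → ℝ) (i : α) : ℝ :=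
  ∑ S : Finset α, alphaPlus W i S * prodDist p S

/-- The generalized Recursive Measure of NO-voting power under a
voting-independent probability distribution with vote probabilities `p`. -/
noncomputable def RMminusP (W : Finset (Finset α)) (p : α → ℝ) (i : α) : ℝ :=
  ∑ S : Finset α, alphaMinus W i S * prodDist p S

namespace RMDonationProof
set_option linter.unusedSectionVars false

variable {α : Type*} [Fintype α] [DecidableEq α]

/-- Removal indices for loyal children of a winning division. -/
def Kwin (W : Finset (Finset α)) (S : Finset α) : Finset α :=
  S.filter (fun k => S.erase k ∈ W)

/-- Addition indices for loyal children of a losing division. -/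
def Kloss (W : Finset (Finset α)) (S : Finset α) : Finset α :=
  Sᶜ.filter (fun k => insert k S ∉ W)

lemma mem_Kwin {W : Finset (Finset α)} {S : Finset α} {k : α} :
    k ∈ Kwin W S ↔ k ∈ S ∧ S.erase k ∈ W := Finset.mem_filter

lemma mem_Kloss {W : Finset (Finset α)} {S : Finset α} {k : α} :
    k ∈ Kloss W S ↔ k ∉ S ∧ insert k S ∉ W := by
  simp [Kloss]

lemma erase_injOn {S : Finset α} :
    ∀ x ∈ Kwin W S, ∀ y ∈ Kwin W S, S.erase x = S.erase y → x = y := by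
  intro x hx y hy hxy
  by_contra hne
  have hyS : y ∈ S := (mem_Kwin.1 hy).1
  have : y ∈ S.erase x := Finset.mem_erase.2 ⟨fun h => hne h.symm, hyS⟩
  rw [hxy] at this
  exact (Finset.notMem_erase y S) this

lemma insert_injOn {S : Finset α} :
    ∀ x ∈ Kloss W S, ∀ y ∈ Kloss W S, insert x S = insert y S → x = y := by
  intro x hx y hy hxy
  have hxS : x ∉ S := (mem_Kloss.1 hx).1
  have hyS : y ∉ S := (mem_Kloss.1 hy).1
  have : x ∈ insert y S := hxy ▸ Finset.mem_insert_self x S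
  rcases Finset.mem_insert.1 this with h | h
  · exact h
  · exact absurd h hxS

lemma alphaPlus_eq (W : Finset (Finset α)) (i : α) (S : Finset α) :
    alphaPlus W i S = if i ∈ S ∧ S ∈ W ∧ S.erase i ∉ W then 1
      else if S ∉ W ∨ i ∉ S then 0
      else (∑ k ∈ Kwin W S, alphaPlus W i (S.erase k)) / (Kwin W S).card := by
  rw [alphaPlus]
  have h1 : LCwin W S = (Kwin W S).image (fun k => S.erase k) := by
    unfold LCwin Kwin
    rw [Finset.filter_image]
  rw [Finset.sum_attach (LCwin W S) (alphaPlus W i), h1,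
    Finset.sum_image erase_injOn, Finset.card_image_of_injOn erase_injOn]

lemma alphaMinus_eq (W : Finset (Finset α)) (i : α) (S : Finset α) :
    alphaMinus W i S = if i ∉ S ∧ S ∉ W ∧ insert i S ∈ W then 1
      else if S ∈ W ∨ i ∈ S then 0
      else (∑ k ∈ Kloss W S, alphaMinus W i (insert k S)) / (Kloss W S).card := by
  rw [alphaMinus]
  have h1 : LCloss W S = (Kloss W S).image (fun k => insert k S) := by
    unfold LCloss Kloss
    rw [Finset.filter_image]
  rw [Finset.sum_attach (LCloss W S) (alphaMinus W i), h1,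
    Finset.sum_image insert_injOn, Finset.card_image_of_injOn insert_injOn]

lemma alphaPlus_bounds (W : Finset (Finset α)) (i : α) :
    ∀ S : Finset α, 0 ≤ alphaPlus W i S ∧ alphaPlus W i S ≤ 1 := by
  intro S
  induction S using Finset.strongInduction with
  | _ S IH =>
    rw [alphaPlus_eq]
    split_ifs with h1 h2
    · norm_num
    · norm_num
    · have hsub : ∀ k ∈ Kwin W S, S.erase k ⊂ S := fun k hk =>
        Finset.erase_ssubset (mem_Kwin.1 hk).1
      constructor
      · apply div_nonneg
        · exact Finset.sum_nonneg fun k hk => (IH _ (hsub k hk)).1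
        · positivity
      · rcases Nat.eq_zero_or_pos (Kwin W S).card with h0 | hpos
        · simp [Finset.card_eq_zero.1 h0]
        · rw [div_le_one (by exact_mod_cast hpos)]
          calc ∑ k ∈ Kwin W S, alphaPlus W i (S.erase k)
              ≤ ∑ k ∈ Kwin W S, 1 := Finset.sum_le_sum fun k hk => (IH _ (hsub k hk)).2
            _ = (Kwin W S).card := by simp

lemma alphaPlus_nonneg (W : Finset (Finset α)) (i : α) (S : Finset α) :
    0 ≤ alphaPlus W i S := (alphaPlus_bounds W i S).1

lemma alphaPlus_le_one (W : Finset (Finset α)) (i : α) (S : Finset α) :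
    alphaPlus W i S ≤ 1 := (alphaPlus_bounds W i S).2

lemma alphaMinus_bounds (W : Finset (Finset α)) (i : α) :
    ∀ (N : ℕ) (S : Finset α), Sᶜ.card ≤ N → 0 ≤ alphaMinus W i S ∧ alphaMinus W i S ≤ 1 := by
  intro N
  induction N with
  | zero =>
    intro S hS
    rw [alphaMinus_eq]
    have hc : Sᶜ = ∅ := Finset.card_eq_zero.1 (Nat.le_zero.1 hS)
    have hK : Kloss W S = ∅ := by
      unfold Kloss; rw [hc]; simp
    split_ifs <;> simp [hK]
  | succ N IH =>
    intro S hS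
    rw [alphaMinus_eq]
    split_ifs with h1 h2
    · norm_num
    · norm_num
    · have hsub : ∀ k ∈ Kloss W S, (insert k S)ᶜ.card ≤ N := by
        intro k hk
        have hkc : k ∈ Sᶜ := Finset.mem_compl.2 (mem_Kloss.1 hk).1
        rw [Finset.compl_insert]
        have := Finset.card_erase_lt_of_mem hkc
        omega
      constructor
      · apply div_nonneg
        · exact Finset.sum_nonneg fun k hk => (IH _ (hsub k hk)).1
        · positivity
      · rcases Nat.eq_zero_or_pos (Kloss W S).card with h0 | hpos
        · simp [Finset.card_eq_zero.1 h0]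
        · rw [div_le_one (by exact_mod_cast hpos)]
          calc ∑ k ∈ Kloss W S, alphaMinus W i (insert k S)
              ≤ ∑ k ∈ Kloss W S, 1 := Finset.sum_le_sum fun k hk => (IH _ (hsub k hk)).2
            _ = (Kloss W S).card := by simp

lemma alphaMinus_nonneg (W : Finset (Finset α)) (i : α) (S : Finset α) :
    0 ≤ alphaMinus W i S := (alphaMinus_bounds W i Sᶜ.card S le_rfl).1

lemma alphaMinus_le_one (W : Finset (Finset α)) (i : α) (S : Finset α) :
    alphaMinus W i S ≤ 1 := (alphaMinus_bounds W i Sᶜ.card S le_rfl).2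

section Dummy

variable {V : Finset (Finset α)} {i j : α}

/-- If `j` is a dummy in `V`, the YES-efficacy of `i ≠ j` is unchanged by `j` joining. -/
lemma alphaPlus_dummy (hd : ∀ S : Finset α, j ∉ S → (insert j S ∈ V ↔ S ∈ V))
    (hij : i ≠ j) : ∀ S : Finset α, j ∉ S → alphaPlus V i (insert j S) = alphaPlus V i S := by
  intro S
  induction S using Finset.strongInduction with
  | _ S IH =>
    intro hjS
    rw [alphaPlus_eq V i (insert j S), alphaPlus_eq V i S]
    have hm : insert j S ∈ V ↔ S ∈ V := hd S hjS
    have hi : i ∈ insert j S ↔ i ∈ S := by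
      simp [Finset.mem_insert, hij]
    have he : (insert j S).erase i = insert j (S.erase i) :=
      Finset.erase_insert_of_ne (Ne.symm hij)
    have hem : (insert j S).erase i ∈ V ↔ S.erase i ∈ V := by
      rw [he]; exact hd _ (fun h => hjS (Finset.mem_of_mem_erase h))
    by_cases hdec : i ∈ S ∧ S ∈ V ∧ S.erase i ∉ V
    · rw [if_pos ⟨hi.2 hdec.1, hm.2 hdec.2.1, fun h => hdec.2.2 (hem.1 h)⟩, if_pos hdec]
    · by_cases hzero : S ∉ V ∨ i ∉ S
      · rw [if_neg, if_pos, if_neg hdec, if_pos hzero]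
        · rcases hzero with h | h
          · exact Or.inl (fun hh => h (hm.1 hh))
          · exact Or.inr (fun hh => h (hi.1 hh))
        · intro ⟨h1, h2, h3⟩
          exact hdec ⟨hi.1 h1, hm.1 h2, fun h => h3 (hem.2 h)⟩
      · push_neg at hzero
        obtain ⟨hSV, hiS⟩ := hzero
        rw [if_neg, if_neg, if_neg hdec, if_neg]
        rotate_left
        · exact fun h => h.elim (fun h' => h' hSV) (fun h' => h' hiS)
        · exact fun h => h.elim (fun h' => h' (hm.2 hSV)) (fun h' => h' (hi.2 hiS))
        · intro ⟨h1, h2, h3⟩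
          exact hdec ⟨hi.1 h1, hm.1 h2, fun h => h3 (hem.2 h)⟩
        -- both sides in averaging form
        have hKw : Kwin V (insert j S) = insert j (Kwin V S) := by
          unfold Kwin
          rw [Finset.filter_insert, if_pos (by rwa [Finset.erase_insert hjS])]
          congr 1
          apply Finset.filter_congr
          intro k hk
          have hkj : j ≠ k := fun h => hjS (h ▸ hk)
          rw [Finset.erase_insert_of_ne hkj]
          exact hd _ (fun h => hjS (Finset.mem_of_mem_erase h))
        have hjK : j ∉ Kwin V S := fun h => hjS (mem_Kwin.1 h).1
        rw [hKw, Finset.sum_insert hjK, Finset.card_insert_of_notMem hjK,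
          Finset.erase_insert hjS]
        have hsum : ∑ k ∈ Kwin V S, alphaPlus V i ((insert j S).erase k)
            = ∑ k ∈ Kwin V S, alphaPlus V i (S.erase k) := by
          apply Finset.sum_congr rfl
          intro k hk
          have hkS : k ∈ S := (mem_Kwin.1 hk).1
          have hkj : j ≠ k := fun h => hjS (h ▸ hkS)
          rw [Finset.erase_insert_of_ne hkj]
          exact IH _ (Finset.erase_ssubset hkS) (fun h => hjS (Finset.mem_of_mem_erase h))
        rw [hsum]
        have hS : alphaPlus V i S = (∑ k ∈ Kwin V S, alphaPlus V i (S.erase k)) / (Kwin V S).card := by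
          rw [alphaPlus_eq, if_neg hdec, if_neg (by push_neg; exact ⟨hSV, hiS⟩)]
        rcases Nat.eq_zero_or_pos (Kwin V S).card with h0 | hpos
        · have : Kwin V S = ∅ := Finset.card_eq_zero.1 h0
          simp [this, hS]
        · have hc : ((Kwin V S).card : ℝ) ≠ 0 := by positivity
          rw [hS]
          push_cast
          field_simp
          ring
    
/-- If `j` is a dummy in `V`, the NO-efficacy of `i ≠ j` is unchanged by `j` joining. -/
lemma alphaMinus_dummy (hd : ∀ S : Finset α, j ∉ S → (insert j S ∈ V ↔ S ∈ V))
    (hij : i ≠ j) : ∀ (N : ℕ) (S : Finset α), Sᶜ.card ≤ N → j ∉ S →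
      alphaMinus V i (insert j S) = alphaMinus V i S := by
  intro N
  induction N with
  | zero =>
    intro S hN hjS
    exact absurd (Finset.card_eq_zero.1 (Nat.le_zero.1 hN) ▸ Finset.mem_compl.2 hjS)
      (Finset.notMem_empty j)
  | succ N IH =>
    intro S hN hjS
    rw [alphaMinus_eq V i (insert j S), alphaMinus_eq V i S]
    have hm : insert j S ∈ V ↔ S ∈ V := hd S hjS
    have hi : i ∈ insert j S ↔ i ∈ S := by simp [Finset.mem_insert, hij]
    have hins : insert i (insert j S) = insert j (insert i S) := Finset.insert_comm i j S
    have him : insert i (insert j S) ∈ V ↔ insert i S ∈ V := by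
      rw [hins]
      exact hd _ (by simp [Finset.mem_insert, Ne.symm hij, hjS])
    by_cases hdec : i ∉ S ∧ S ∉ V ∧ insert i S ∈ V
    · rw [if_pos ⟨fun h => hdec.1 (hi.1 h), fun h => hdec.2.1 (hm.1 h), him.2 hdec.2.2⟩,
        if_pos hdec]
    · by_cases hzero : S ∈ V ∨ i ∈ S
      · rw [if_neg, if_pos, if_neg hdec, if_pos hzero]
        · rcases hzero with h | h
          · exact Or.inl (hm.2 h)
          · exact Or.inr (hi.2 h)
        · intro ⟨h1, h2, h3⟩
          exact hdec ⟨fun h => h1 (hi.2 h), fun h => h2 (hm.2 h), him.1 h3⟩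
      · push_neg at hzero
        obtain ⟨hSV, hiS⟩ := hzero
        rw [if_neg, if_neg, if_neg hdec, if_neg]
        rotate_left
        · exact fun h => h.elim (fun h' => hSV h') (fun h' => hiS h')
        · exact fun h => h.elim (fun h' => hSV (hm.1 h')) (fun h' => hiS (hi.1 h'))
        · intro ⟨h1, h2, h3⟩
          exact hdec ⟨fun h => h1 (hi.2 h), fun h => h2 (hm.2 h), him.1 h3⟩
        -- averaging case
        have hKl : Kloss V S = insert j (Kloss V (insert j S)) := by
          apply Finset.ext
          intro k
          rw [Finset.mem_insert, mem_Kloss, mem_Kloss]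
          constructor
          · rintro ⟨hk1, hk2⟩
            by_cases hkj : k = j
            · exact Or.inl hkj
            · refine Or.inr ⟨?_, ?_⟩
              · intro h
                rcases Finset.mem_insert.1 h with h' | h'
                · exact hkj h'
                · exact hk1 h'
              · rw [Finset.insert_comm]
                intro h
                have hjmem : j ∉ insert k S := by
                  intro h'
                  rcases Finset.mem_insert.1 h' with h'' | h''
                  · exact hkj h''.symm
                  · exact hjS h''
                exact hk2 ((hd _ hjmem).1 h)
          · rintro (rfl | ⟨hk1, hk2⟩)
            · exact ⟨hjS, fun h => hSV (hm.1 h)⟩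
            · have hkj : k ≠ j := fun h => hk1 (h ▸ Finset.mem_insert_self j S)
              have hkS : k ∉ S := fun h => hk1 (Finset.mem_insert_of_mem h)
              refine ⟨hkS, fun h => hk2 ?_⟩
              rw [Finset.insert_comm]
              have hjmem : j ∉ insert k S := by
                intro h'
                rcases Finset.mem_insert.1 h' with h'' | h''
                · exact hkj h''.symm
                · exact hjS h''
              exact (hd _ hjmem).2 h
        have hjK : j ∉ Kloss V (insert j S) := fun h => (mem_Kloss.1 h).1 (Finset.mem_insert_self j S)
        rw [hKl, Finset.sum_insert hjK, Finset.card_insert_of_notMem hjK]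
        have hsum : ∑ k ∈ Kloss V (insert j S), alphaMinus V i (insert k S)
            = ∑ k ∈ Kloss V (insert j S), alphaMinus V i (insert k (insert j S)) := by
          apply Finset.sum_congr rfl
          intro k hk
          have hk1 := (mem_Kloss.1 hk).1
          have hkj : k ≠ j := fun h => hk1 (h ▸ Finset.mem_insert_self j S)
          have hkS : k ∉ S := fun h => hk1 (Finset.mem_insert_of_mem h)
          rw [Finset.insert_comm]
          have hjm : j ∉ insert k S := by
            intro h'
            rcases Finset.mem_insert.1 h' with h'' | h''
            · exact hkj h''.symm
            · exact hjS h''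
          refine (IH (insert k S) ?_ hjm).symm
          rw [Finset.compl_insert]
          have : j ∈ Sᶜ := Finset.mem_compl.2 hjS
          have hkc : k ∈ Sᶜ := Finset.mem_compl.2 hkS
          have := Finset.card_erase_lt_of_mem hkc
          omega
        rw [hsum]
        set c := (Kloss V (insert j S)).card with hc
        set A := ∑ k ∈ Kloss V (insert j S), alphaMinus V i (insert k (insert j S)) with hA
        -- goal : A / c = (alphaMinus V i (insert j S) + A) / (c + 1)
        have hIS : alphaMinus V i (insert j S) = A / c := by
          rw [alphaMinus_eq, if_neg, if_neg]
          · exact fun h => h.elim (fun h' => hSV (hm.1 h')) (fun h' => hiS (hi.1 h'))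
          · intro ⟨h1, h2, h3⟩
            exact hdec ⟨fun h => h1 (hi.2 h), fun h => h2 (hm.2 h), him.1 h3⟩
        rcases Nat.eq_zero_or_pos c with h0 | hpos
        · have : Kloss V (insert j S) = ∅ := Finset.card_eq_zero.1 h0
          simp [this, hA, hIS, h0]
        · have hcne : (c : ℝ) ≠ 0 := by positivity
          rw [hIS]
          push_cast
          field_simp
          ring

end Dummy

section Helpers

variable {V : Finset (Finset α)} {i : α} {S : Finset α}

lemma alphaPlus_of_dec (h1 : i ∈ S) (h2 : S ∈ V) (h3 : S.erase i ∉ V) :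
    alphaPlus V i S = 1 := by
  rw [alphaPlus_eq, if_pos ⟨h1, h2, h3⟩]

lemma alphaPlus_of_lose (h : S ∉ V) : alphaPlus V i S = 0 := by
  rw [alphaPlus_eq, if_neg, if_pos (Or.inl h)]
  rintro ⟨-, h2, -⟩; exact h h2

lemma alphaPlus_of_not_mem (h : i ∉ S) : alphaPlus V i S = 0 := by
  rw [alphaPlus_eq, if_neg, if_pos (Or.inr h)]
  rintro ⟨h1, -, -⟩; exact h h1

lemma alphaMinus_of_dec (h1 : i ∉ S) (h2 : S ∉ V) (h3 : insert i S ∈ V) :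
    alphaMinus V i S = 1 := by
  rw [alphaMinus_eq, if_pos ⟨h1, h2, h3⟩]

lemma alphaMinus_of_win (h : S ∈ V) : alphaMinus V i S = 0 := by
  rw [alphaMinus_eq, if_neg, if_pos (Or.inl h)]
  rintro ⟨-, h2, -⟩; exact h2 h

lemma alphaMinus_of_mem (h : i ∈ S) : alphaMinus V i S = 0 := by
  rw [alphaMinus_eq, if_neg, if_pos (Or.inr h)]
  rintro ⟨h1, -, -⟩; exact h1 h

/-- Averaging form for `alphaPlus` at a division `insert a U` in the
non-decisive winning case, with the (zero) term of the removal of `a` split off. -/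
lemma alphaPlus_avg (V : Finset (Finset α)) (a : α) (U : Finset α)
    (haU : a ∉ U) (hwin : insert a U ∈ V) (hU : U ∈ V) :
    alphaPlus V a (insert a U) =
      (∑ k ∈ U.filter (fun k => insert a (U.erase k) ∈ V),
        alphaPlus V a (insert a (U.erase k))) /
      ((U.filter (fun k => insert a (U.erase k) ∈ V)).card + 1) := by
  have herase : (insert a U).erase a = U := Finset.erase_insert haU
  rw [alphaPlus_eq, if_neg (by rintro ⟨-, -, h3⟩; rw [herase] at h3; exact h3 hU),
    if_neg (by push_neg; exact ⟨hwin, Finset.mem_insert_self a U⟩)]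
  have hKw : Kwin V (insert a U) = insert a (U.filter (fun k => insert a (U.erase k) ∈ V)) := by
    unfold Kwin
    rw [Finset.filter_insert, if_pos (by rwa [herase])]
    congr 1
    apply Finset.filter_congr
    intro k hk
    rw [Finset.erase_insert_of_ne (ne_of_mem_of_not_mem hk haU).symm]
  have haF : a ∉ U.filter (fun k => insert a (U.erase k) ∈ V) :=
    fun h => haU (Finset.mem_filter.1 h).1
  rw [hKw, Finset.sum_insert haF, Finset.card_insert_of_notMem haF, herase,
    alphaPlus_of_not_mem haU, zero_add]
  rw [Finset.sum_congr rfl (fun k hk => by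
    rw [Finset.erase_insert_of_ne (ne_of_mem_of_not_mem (Finset.mem_filter.1 hk).1 haU).symm])]
  push_cast
  ring_nf

/-- Averaging form for `alphaMinus` at a losing division `U` in the
non-decisive case, with the (zero) term of the addition of `a` split off. -/
lemma alphaMinus_avg (V : Finset (Finset α)) (a : α) (U : Finset α)
    (haU : a ∉ U) (hlose : U ∉ V) (hins : insert a U ∉ V) :
    alphaMinus V a U =
      (∑ k ∈ (Kloss V U).erase a, alphaMinus V a (insert k U)) /
      (((Kloss V U).erase a).card + 1) := by
  rw [alphaMinus_eq, if_neg (by rintro ⟨-, -, h3⟩; exact hins h3),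
    if_neg (by push_neg; exact ⟨hlose, haU⟩)]
  have haK : a ∈ Kloss V U := mem_Kloss.2 ⟨haU, hins⟩
  have hsum : ∑ k ∈ Kloss V U, alphaMinus V a (insert k U)
      = alphaMinus V a (insert a U) + ∑ k ∈ (Kloss V U).erase a, alphaMinus V a (insert k U) :=
    (Finset.add_sum_erase _ _ haK).symm
  have hcard : (Kloss V U).card = ((Kloss V U).erase a).card + 1 :=
    (Finset.card_erase_add_one haK).symm
  rw [hsum, hcard, alphaMinus_of_mem (Finset.mem_insert_self a U), zero_add]
  push_cast
  ring_nf

lemma avg_aux1 {ι : Type*} [DecidableEq ι] {s t : Finset ι} {f g : ι → ℝ} (hst : s ⊆ t)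
    (h0 : ∀ k ∈ s, 0 ≤ f k) (h1 : ∀ k ∈ s, f k ≤ 1) (hfg : ∀ k ∈ s, f k ≤ g k)
    (hex : ∀ k ∈ t, k ∉ s → g k = 1) :
    (∑ k ∈ s, f k) / (s.card + 1) ≤ (∑ k ∈ t, g k) / (t.card + 1) := by
  have hsf : ∑ k ∈ s, f k ≤ (s.card : ℝ) := by
    calc ∑ k ∈ s, f k ≤ ∑ _k ∈ s, (1 : ℝ) := Finset.sum_le_sum h1
      _ = s.card := by simp
  have hsf0 : 0 ≤ ∑ k ∈ s, f k := Finset.sum_nonneg h0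
  have hfg' : ∑ k ∈ s, f k ≤ ∑ k ∈ s, g k := Finset.sum_le_sum hfg
  rw [div_le_div_iff₀ (by positivity) (by positivity), ← Finset.sum_sdiff hst]
  have hts : ∑ k ∈ t \ s, g k = (((t \ s).card : ℕ) : ℝ) := by
    rw [Finset.sum_congr rfl (fun k hk =>
      hex k (Finset.mem_sdiff.1 hk).1 (Finset.mem_sdiff.1 hk).2)]
    simp
  have hcard : (t.card : ℝ) = ((t \ s).card : ℝ) + (s.card : ℝ) := by
    rw [← Nat.cast_add, Finset.card_sdiff_add_card_eq_card hst]
  rw [hts, hcard]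
  have hd0 : (0:ℝ) ≤ ((t \ s).card : ℝ) := by positivity
  have hc0 : (0:ℝ) ≤ (s.card : ℝ) := by positivity
  nlinarith [mul_nonneg (sub_nonneg.2 hfg') hc0, mul_nonneg (sub_nonneg.2 hsf) hd0,
    mul_nonneg (sub_nonneg.2 hfg') hd0]

lemma avg_aux2 {ι : Type*} {s : Finset ι} {f g : ι → ℝ} {e : ℝ}
    (hfg : ∀ k ∈ s, f k ≤ g k) (hg0 : 0 ≤ ∑ k ∈ s, g k)
    (he : e ≤ (∑ k ∈ s, g k) / (s.card + 1)) :
    (e + ∑ k ∈ s, f k) / (s.card + 2) ≤ (∑ k ∈ s, g k) / (s.card + 1) := by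
  have hc1 : (0:ℝ) < (s.card : ℝ) + 1 := by positivity
  rw [div_le_iff₀ (by positivity : (0:ℝ) < (s.card:ℝ) + 2)]
  have hkey : (∑ k ∈ s, g k) / (s.card + 1) * ((s.card:ℝ) + 2)
      = (∑ k ∈ s, g k) + (∑ k ∈ s, g k) / (s.card + 1) := by
    field_simp
    ring
  rw [hkey]
  have := Finset.sum_le_sum hfg
  linarith

end Helpers

section Main

variable {W What : Finset (Finset α)} {i j : α}

lemma what_of_mem (hdon : Donation W What i j) (hij : i ≠ j) :
    ∀ S : Finset α, i ∈ S → (S ∈ What ↔ insert j S ∈ W) := by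
  intro S hiS
  have hiU : i ∉ (S.erase i).erase j := fun h =>
    Finset.notMem_erase i S (Finset.mem_of_mem_erase h)
  have hjU : j ∉ (S.erase i).erase j := Finset.notMem_erase j _
  obtain ⟨h1, h2, h3, h4⟩ := hdon _ hiU hjU
  by_cases hjS : j ∈ S
  · have e1 : insert j ((S.erase i).erase j) = S.erase i :=
      Finset.insert_erase (Finset.mem_erase.2 ⟨Ne.symm hij, hjS⟩)
    have hSeq : S = insert i (insert j ((S.erase i).erase j)) := by
      rw [e1, Finset.insert_erase hiS]
    have hjSeq : insert j S = S := Finset.insert_eq_self.2 hjS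
    rw [hjSeq]
    nth_rewrite 1 [hSeq]
    nth_rewrite 2 [hSeq]
    exact h1
  · have hSeq : S = insert i ((S.erase i).erase j) := by
      rw [Finset.erase_eq_of_notMem (fun h => hjS (Finset.mem_of_mem_erase h)),
        Finset.insert_erase hiS]
    rw [show insert j S = insert i (insert j ((S.erase i).erase j)) by
      nth_rewrite 1 [hSeq]; exact Finset.insert_comm j i _]
    nth_rewrite 1 [hSeq]
    exact h2

lemma what_of_not_mem (hdon : Donation W What i j) (hij : i ≠ j) :
    ∀ S : Finset α, i ∉ S → (S ∈ What ↔ S.erase j ∈ W) := by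
  intro S hiS
  have hiU : i ∉ S.erase j := fun h => hiS (Finset.mem_of_mem_erase h)
  have hjU : j ∉ S.erase j := Finset.notMem_erase j S
  obtain ⟨h1, h2, h3, h4⟩ := hdon _ hiU hjU
  by_cases hjS : j ∈ S
  · have hSeq : S = insert j (S.erase j) := (Finset.insert_erase hjS).symm
    nth_rewrite 1 [hSeq]
    exact h3
  · rw [Finset.erase_eq_of_notMem hjS] at h4 ⊢
    exact h4

variable (hW : SimpleVotingGame W) (hij : i ≠ j)
  (hA : ∀ S : Finset α, i ∈ S → (S ∈ What ↔ insert j S ∈ W))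
  (hB : ∀ S : Finset α, i ∉ S → (S ∈ What ↔ S.erase j ∈ W))

include hW hij hA hB in
theorem donation_plus :
    ∀ (N : ℕ) (U : Finset α), U.card < N → i ∉ U → j ∉ U →
    ∀ a b : α, ((a = i ∧ b = j) ∨ (a = j ∧ b = i)) →
    alphaPlus W a (insert a U) ≤ alphaPlus What i (insert i U) ∧
    alphaPlus W a (insert a (insert b U)) ≤ alphaPlus What i (insert i U) := by
  intro N
  induction N with
  | zero => intro U hU; exact absurd hU (Nat.not_lt_zero _)
  | succ N IH =>
  intro U hN hiU hjU a b hcase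
  have monW : ∀ S T : Finset α, S ∈ W → S ⊆ T → T ∈ W := hW.1
  have haU : a ∉ U := by rcases hcase with ⟨rfl, -⟩ | ⟨rfl, -⟩ <;> assumption
  have hbU : b ∉ U := by rcases hcase with ⟨-, rfl⟩ | ⟨-, rfl⟩ <;> assumption
  have hab : a ≠ b := by
    rcases hcase with ⟨ha, hb⟩ | ⟨ha, hb⟩ <;> rw [ha, hb]
    · exact hij
    · exact hij.symm
  have hins : ∀ X : Finset α, insert a (insert b X) = insert i (insert j X) := by
    intro X
    rcases hcase with ⟨ha, hb⟩ | ⟨ha, hb⟩ <;> rw [ha, hb]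
    exact Finset.insert_comm j i X
  have hjiX : ∀ X : Finset α, insert j (insert i X) = insert i (insert j X) :=
    fun X => Finset.insert_comm j i X
  have hsubaij : ∀ X : Finset α, insert a X ⊆ insert i (insert j X) := by
    intro X
    have h1 : insert a X ⊆ insert a (insert b X) :=
      Finset.insert_subset_insert _ (Finset.subset_insert _ _)
    rwa [hins X] at h1
  have hnoij : ∀ X : Finset α, i ∉ X → j ∉ X → (X ∈ What ↔ X ∈ W) := by
    intro X hiX hjX
    rw [hB X hiX, Finset.erase_eq_of_notMem hjX]
  -- FIRST COMPONENT
  have hG2 : alphaPlus W a (insert a U) ≤ alphaPlus What i (insert i U) := by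
    by_cases hTwin : insert a U ∈ W
    · have hwhatwin : insert i U ∈ What := by
        rw [hA _ (Finset.mem_insert_self i U), hjiX U]
        exact monW _ _ hTwin (hsubaij U)
      by_cases hUwin : U ∈ W
      · -- both averaging
        have hUwhat : U ∈ What := (hnoij U hiU hjU).2 hUwin
        rw [alphaPlus_avg W a U haU hTwin hUwin,
          alphaPlus_avg What i U hiU hwhatwin hUwhat]
        apply avg_aux1
        · intro k hk
          obtain ⟨hkU, hkW⟩ := Finset.mem_filter.1 hk
          refine Finset.mem_filter.2 ⟨hkU, ?_⟩
          rw [hA _ (Finset.mem_insert_self i _), hjiX]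
          exact monW _ _ hkW (hsubaij _)
        · intro k _; exact alphaPlus_nonneg _ _ _
        · intro k _; exact alphaPlus_le_one _ _ _
        · intro k hk
          obtain ⟨hkU, -⟩ := Finset.mem_filter.1 hk
          have hcard : (U.erase k).card < N :=
            lt_of_lt_of_le (Finset.card_erase_lt_of_mem hkU) (Nat.lt_succ_iff.1 hN)
          exact (IH (U.erase k) hcard (fun h => hiU (Finset.mem_of_mem_erase h))
            (fun h => hjU (Finset.mem_of_mem_erase h)) a b hcase).1
        · intro k hk hks
          obtain ⟨hkU, hkWhat⟩ := Finset.mem_filter.1 hk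
          have hkW : insert a (U.erase k) ∉ W := fun h => hks (Finset.mem_filter.2 ⟨hkU, h⟩)
          have hiUk : i ∉ U.erase k := fun h => hiU (Finset.mem_of_mem_erase h)
          have hjUk : j ∉ U.erase k := fun h => hjU (Finset.mem_of_mem_erase h)
          apply alphaPlus_of_dec (Finset.mem_insert_self i _) hkWhat
          rw [Finset.erase_insert hiUk, hnoij _ hiUk hjUk]
          intro h
          exact hkW (monW _ _ h (Finset.subset_insert a _))
      · -- both decisive
        have h1 : alphaPlus W a (insert a U) = 1 :=
          alphaPlus_of_dec (Finset.mem_insert_self a U) hTwin (by rwa [Finset.erase_insert haU])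
        have h2 : alphaPlus What i (insert i U) = 1 := by
          apply alphaPlus_of_dec (Finset.mem_insert_self i U) hwhatwin
          rw [Finset.erase_insert hiU, hnoij U hiU hjU]
          exact hUwin
        rw [h1, h2]
    · rw [alphaPlus_of_lose hTwin]
      exact alphaPlus_nonneg _ _ _
  refine ⟨hG2, ?_⟩
  -- SECOND COMPONENT
  by_cases hT : insert a (insert b U) ∈ W
  · have hwhatwin : insert i U ∈ What := by
      rw [hA _ (Finset.mem_insert_self i U), hjiX U, ← hins U]
      exact hT
    by_cases hTb : insert b U ∈ W
    · by_cases hUwin : U ∈ W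
      · -- both averaging
        have hUwhat : U ∈ What := (hnoij U hiU hjU).2 hUwin
        have hanbU : a ∉ insert b U := by
          intro h
          rcases Finset.mem_insert.1 h with h' | h'
          exacts [hab h', haU h']
        rw [alphaPlus_avg W a (insert b U) hanbU hT hTb,
          alphaPlus_avg What i U hiU hwhatwin hUwhat]
        rw [Finset.filter_insert]
        set D := U.filter (fun k => insert i (U.erase k) ∈ What) with hDdef
        have hcore : U.filter (fun k => insert a ((insert b U).erase k) ∈ W) = D := by
          rw [hDdef]
          apply Finset.filter_congr
          intro k hk
          have hbk : b ≠ k := (ne_of_mem_of_not_mem hk hbU).symm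
          have hEq : insert a ((insert b U).erase k) = insert j (insert i (U.erase k)) := by
            rw [Finset.erase_insert_of_ne hbk, hins (U.erase k), hjiX]
          rw [hEq]
          exact (hA _ (Finset.mem_insert_self i _)).symm
        have hIH2 : ∀ k ∈ D, alphaPlus W a (insert a (insert b (U.erase k)))
            ≤ alphaPlus What i (insert i (U.erase k)) := by
          intro k hk
          have hkU : k ∈ U := (Finset.mem_filter.1 hk).1
          have hcard : (U.erase k).card < N :=
            lt_of_lt_of_le (Finset.card_erase_lt_of_mem hkU) (Nat.lt_succ_iff.1 hN)
          exact (IH (U.erase k) hcard (fun h => hiU (Finset.mem_of_mem_erase h))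
            (fun h => hjU (Finset.mem_of_mem_erase h)) a b hcase).2
        split_ifs with hbF
        · -- `b` belongs to the W-side removal set
          rw [hcore]
          have hbD : b ∉ D := fun h => hbU (Finset.mem_filter.1 h).1
          rw [Finset.sum_insert hbD, Finset.card_insert_of_notMem hbD,
            Finset.erase_insert hbU]
          have hsum : ∑ k ∈ D, alphaPlus W a (insert a ((insert b U).erase k))
              = ∑ k ∈ D, alphaPlus W a (insert a (insert b (U.erase k))) := by
            apply Finset.sum_congr rfl
            intro k hk
            rw [Finset.erase_insert_of_ne
              (ne_of_mem_of_not_mem (Finset.mem_filter.1 hk).1 hbU).symm]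
          rw [hsum]
          have hcast : ((D.card + 1 : ℕ) : ℝ) + 1 = (D.card : ℝ) + 2 := by
            push_cast; ring
          rw [hcast]
          apply avg_aux2 hIH2
          · exact Finset.sum_nonneg (fun k _ => alphaPlus_nonneg _ _ _)
          · rw [← alphaPlus_avg What i U hiU hwhatwin hUwhat]
            exact hG2
        · -- `b` does not belong to the W-side removal set
          rw [hcore]
          have hsum : ∑ k ∈ D, alphaPlus W a (insert a ((insert b U).erase k))
              = ∑ k ∈ D, alphaPlus W a (insert a (insert b (U.erase k))) := by
            apply Finset.sum_congr rfl
            intro k hk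
            rw [Finset.erase_insert_of_ne
              (ne_of_mem_of_not_mem (Finset.mem_filter.1 hk).1 hbU).symm]
          rw [hsum]
          have hnum := Finset.sum_le_sum hIH2
          have hden : (0:ℝ) ≤ (D.card : ℝ) + 1 := by positivity
          exact div_le_div_of_nonneg_right hnum hden
      · have h2 : alphaPlus What i (insert i U) = 1 := by
          apply alphaPlus_of_dec (Finset.mem_insert_self i U) hwhatwin
          rw [Finset.erase_insert hiU, hnoij U hiU hjU]
          exact hUwin
        rw [h2]
        exact alphaPlus_le_one _ _ _
    · have hUwin : U ∉ W := fun h => hTb (monW _ _ h (Finset.subset_insert b U))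
      have h2 : alphaPlus What i (insert i U) = 1 := by
        apply alphaPlus_of_dec (Finset.mem_insert_self i U) hwhatwin
        rw [Finset.erase_insert hiU, hnoij U hiU hjU]
        exact hUwin
      rw [h2]
      exact alphaPlus_le_one _ _ _
  · rw [alphaPlus_of_lose hT]
    exact alphaPlus_nonneg _ _ _

include hij hA hB in
lemma what_dummy : ∀ S : Finset α, j ∉ S → (insert j S ∈ What ↔ S ∈ What) := by
  intro S hjS
  by_cases hiS : i ∈ S
  · rw [hA _ (Finset.mem_insert_of_mem hiS), hA _ hiS, Finset.insert_idem]
  · have hiJ : i ∉ insert j S := by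
      intro h
      rcases Finset.mem_insert.1 h with h' | h'
      exacts [hij h', hiS h']
    rw [hB _ hiJ, hB _ hiS, Finset.erase_insert hjS, Finset.erase_eq_of_notMem hjS]

include hW hij hA hB in
lemma alphaMinus_what_avg (U : Finset α) (hiU : i ∉ U) (hjU : j ∉ U)
    (hUl : U ∉ W) (hIJ : insert i (insert j U) ∉ W) :
    alphaMinus What i U =
      (∑ k ∈ ((Kloss What U).erase i).erase j, alphaMinus What i (insert k U)) /
      ((((Kloss What U).erase i).erase j).card + 1) := by
  have hUwhat : U ∉ What := by
    rw [hB U hiU, Finset.erase_eq_of_notMem hjU]; exact hUl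
  have hiWhat : insert i U ∉ What := by
    rw [hA _ (Finset.mem_insert_self i U),
      show insert j (insert i U) = insert i (insert j U) from Finset.insert_comm j i U]
    exact hIJ
  have h0 := alphaMinus_avg What i U hiU hUwhat hiWhat
  have hd := what_dummy hij hA hB
  have hjK : j ∈ (Kloss What U).erase i :=
    Finset.mem_erase.2 ⟨Ne.symm hij, mem_Kloss.2 ⟨hjU, fun h => hUwhat ((hd U hjU).1 h)⟩⟩
  have hsplit : ∑ k ∈ (Kloss What U).erase i, alphaMinus What i (insert k U)
      = alphaMinus What i (insert j U)
        + ∑ k ∈ ((Kloss What U).erase i).erase j, alphaMinus What i (insert k U) :=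
    (Finset.add_sum_erase _ _ hjK).symm
  have hdummyval : alphaMinus What i (insert j U) = alphaMinus What i U :=
    alphaMinus_dummy hd hij Uᶜ.card U le_rfl hjU
  have hcard : ((Kloss What U).erase i).card = (((Kloss What U).erase i).erase j).card + 1 :=
    (Finset.card_erase_add_one hjK).symm
  rw [hsplit, hdummyval, hcard] at h0
  set X := alphaMinus What i U with hX
  set c := (((Kloss What U).erase i).erase j).card with hc
  set B := ∑ k ∈ ((Kloss What U).erase i).erase j, alphaMinus What i (insert k U) with hBs
  have hcpos : (0:ℝ) < (c:ℝ) + 1 := by have := (Nat.cast_nonneg c : (0:ℝ) ≤ c); linarith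
  rw [eq_div_iff hcpos.ne']
  have hcc : ((c + 1 : ℕ) : ℝ) + 1 = (c:ℝ) + 2 := by push_cast; ring
  rw [hcc] at h0
  have h2 : X * ((c:ℝ) + 2) = X + B := by
    have hne : ((c:ℝ) + 2) ≠ 0 := by have := (Nat.cast_nonneg c : (0:ℝ) ≤ c); linarith
    calc X * ((c:ℝ) + 2) = ((X + B) / ((c:ℝ) + 2)) * ((c:ℝ) + 2) := by rw [← h0]
      _ = X + B := div_mul_cancel₀ _ hne
  linarith

include hW hij hA hB in
theorem donation_minus :
    ∀ (N : ℕ) (U : Finset α), Uᶜ.card < N → i ∉ U → j ∉ U →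
    ∀ a b : α, ((a = i ∧ b = j) ∨ (a = j ∧ b = i)) →
    alphaMinus W a U ≤ alphaMinus What i U ∧
    alphaMinus W a (insert b U) ≤ alphaMinus What i U := by
  intro N
  induction N with
  | zero => intro U hU; exact absurd hU (Nat.not_lt_zero _)
  | succ N IH =>
  intro U hN hiU hjU a b hcase
  have monW : ∀ S T : Finset α, S ∈ W → S ⊆ T → T ∈ W := hW.1
  have haU : a ∉ U := by rcases hcase with ⟨rfl, -⟩ | ⟨rfl, -⟩ <;> assumption
  have hbU : b ∉ U := by rcases hcase with ⟨-, rfl⟩ | ⟨-, rfl⟩ <;> assumption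
  have hab : a ≠ b := by
    rcases hcase with ⟨ha, hb⟩ | ⟨ha, hb⟩ <;> rw [ha, hb]
    · exact hij
    · exact hij.symm
  have hins : ∀ X : Finset α, insert a (insert b X) = insert i (insert j X) := by
    intro X
    rcases hcase with ⟨ha, hb⟩ | ⟨ha, hb⟩ <;> rw [ha, hb]
    exact Finset.insert_comm j i X
  have hjiX : ∀ X : Finset α, insert j (insert i X) = insert i (insert j X) :=
    fun X => Finset.insert_comm j i X
  have hnoij : ∀ X : Finset α, i ∉ X → j ∉ X → (X ∈ What ↔ X ∈ W) := by
    intro X hiX hjX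
    rw [hB X hiX, Finset.erase_eq_of_notMem hjX]
  have hanbU : a ∉ insert b U := by
    intro h
    rcases Finset.mem_insert.1 h with h' | h'
    exacts [hab h', haU h']
  have hkne : ∀ k : α, k ≠ a → k ≠ b → k ≠ i ∧ k ≠ j := by
    intro k h1 h2
    rcases hcase with ⟨ha, hb⟩ | ⟨ha, hb⟩
    · exact ⟨ha ▸ h1, hb ▸ h2⟩
    · exact ⟨hb ▸ h2, ha ▸ h1⟩
  -- H1 component first
  have hH1 : alphaMinus W a (insert b U) ≤ alphaMinus What i U := by
    by_cases hTl : insert b U ∈ W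
    · rw [alphaMinus_of_win hTl]
      exact alphaMinus_nonneg _ _ _
    · have hUl : U ∉ W := fun h => hTl (monW _ _ h (Finset.subset_insert b U))
      have hUwhat : U ∉ What := fun h => hUl ((hnoij U hiU hjU).1 h)
      by_cases hdec : insert a (insert b U) ∈ W
      · have h2 : alphaMinus What i U = 1 := by
          apply alphaMinus_of_dec hiU hUwhat
          rw [hA _ (Finset.mem_insert_self i U), hjiX U, ← hins U]
          exact hdec
        rw [h2]
        exact alphaMinus_le_one _ _ _
      · -- both averaging
        have hIJ : insert i (insert j U) ∉ W := by rw [← hins U]; exact hdec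
        rw [alphaMinus_avg W a (insert b U) hanbU hTl hdec,
          alphaMinus_what_avg hW hij hA hB U hiU hjU hUl hIJ]
        apply avg_aux1
        · -- subset of index sets
          intro k hk
          have hka : k ≠ a := (Finset.mem_erase.1 hk).1
          obtain ⟨hkT, hkW⟩ := mem_Kloss.1 (Finset.mem_erase.1 hk).2
          have hkb : k ≠ b := fun h => hkT (h ▸ Finset.mem_insert_self b U)
          have hkU : k ∉ U := fun h => hkT (Finset.mem_insert_of_mem h)
          obtain ⟨hki, hkj⟩ := hkne k hka hkb
          have hkWU : insert k U ∉ W := fun h =>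
            hkW (monW _ _ h (Finset.insert_subset_insert _ (Finset.subset_insert _ _)))
          refine Finset.mem_erase.2 ⟨hkj, Finset.mem_erase.2 ⟨hki, mem_Kloss.2 ⟨hkU, ?_⟩⟩⟩
          rw [hnoij (insert k U)
            (by intro h; rcases Finset.mem_insert.1 h with h' | h'; exacts [hki h'.symm, hiU h'])
            (by intro h; rcases Finset.mem_insert.1 h with h' | h'; exacts [hkj h'.symm, hjU h'])]
          exact hkWU
        · intro k _; exact alphaMinus_nonneg _ _ _
        · intro k _; exact alphaMinus_le_one _ _ _
        · -- f ≤ g via IH (H1 component)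
          intro k hk
          have hka : k ≠ a := (Finset.mem_erase.1 hk).1
          obtain ⟨hkT, hkW⟩ := mem_Kloss.1 (Finset.mem_erase.1 hk).2
          have hkb : k ≠ b := fun h => hkT (h ▸ Finset.mem_insert_self b U)
          have hkU : k ∉ U := fun h => hkT (Finset.mem_insert_of_mem h)
          obtain ⟨hki, hkj⟩ := hkne k hka hkb
          have hcomm : insert k (insert b U) = insert b (insert k U) :=
            Finset.insert_comm k b U
          rw [hcomm]
          have hcard : (insert k U)ᶜ.card < N := by
            rw [Finset.compl_insert]
            have hkc : k ∈ Uᶜ := Finset.mem_compl.2 hkU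
            have := Finset.card_erase_lt_of_mem hkc
            omega
          exact (IH (insert k U) hcard
            (by intro h; rcases Finset.mem_insert.1 h with h' | h'; exacts [hki h'.symm, hiU h'])
            (by intro h; rcases Finset.mem_insert.1 h with h' | h'; exacts [hkj h'.symm, hjU h'])
            a b hcase).2
        · -- extras are NO-decisive in What
          intro k hk hknot
          have hkj : k ≠ j := (Finset.mem_erase.1 hk).1
          have hki : k ≠ i := (Finset.mem_erase.1 (Finset.mem_erase.1 hk).2).1
          obtain ⟨hkU, hkWhat⟩ := mem_Kloss.1 (Finset.mem_erase.1 (Finset.mem_erase.1 hk).2).2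
          have hiKU : i ∉ insert k U := by
            intro h; rcases Finset.mem_insert.1 h with h' | h'; exacts [hki h'.symm, hiU h']
          have hjKU : j ∉ insert k U := by
            intro h; rcases Finset.mem_insert.1 h with h' | h'; exacts [hkj h'.symm, hjU h']
          have hkb : k ≠ b := by
            rcases hcase with ⟨-, hb⟩ | ⟨-, hb⟩
            · exact hb ▸ hkj
            · exact hb ▸ hki
          have hka : k ≠ a := by
            rcases hcase with ⟨ha, -⟩ | ⟨ha, -⟩
            · exact ha ▸ hki
            · exact ha ▸ hkj
          have hkbW : insert k (insert b U) ∈ W := by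
            by_contra hcon
            apply hknot
            refine Finset.mem_erase.2 ⟨hka, mem_Kloss.2 ⟨?_, hcon⟩⟩
            intro h
            rcases Finset.mem_insert.1 h with h' | h'
            exacts [hkb h', hkU h']
          apply alphaMinus_of_dec hiKU hkWhat
          · rw [hA _ (Finset.mem_insert_self i _), hjiX]
            apply monW _ _ hkbW
            calc insert k (insert b U) = insert b (insert k U) := Finset.insert_comm k b U
              _ ⊆ insert a (insert b (insert k U)) := Finset.subset_insert _ _
              _ = insert i (insert j (insert k U)) := hins _
  -- H2 component
  have hH2 : alphaMinus W a U ≤ alphaMinus What i U := by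
    by_cases hUl : U ∈ W
    · rw [alphaMinus_of_win hUl]
      exact alphaMinus_nonneg _ _ _
    · have hUwhat : U ∉ What := fun h => hUl ((hnoij U hiU hjU).1 h)
      by_cases haW : insert a U ∈ W
      · have h2 : alphaMinus What i U = 1 := by
          apply alphaMinus_of_dec hiU hUwhat
          rw [hA _ (Finset.mem_insert_self i U), hjiX U]
          apply monW _ _ haW
          have h1 : insert a U ⊆ insert a (insert b U) :=
            Finset.insert_subset_insert _ (Finset.subset_insert _ _)
          rwa [hins U] at h1
        rw [h2]
        exact alphaMinus_le_one _ _ _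
      · by_cases hIJ : insert i (insert j U) ∈ W
        · have h2 : alphaMinus What i U = 1 := by
            apply alphaMinus_of_dec hiU hUwhat
            rw [hA _ (Finset.mem_insert_self i U), hjiX U]
            exact hIJ
          rw [h2]
          exact alphaMinus_le_one _ _ _
        · -- both averaging
          rw [alphaMinus_avg W a U haU hUl haW,
            alphaMinus_what_avg hW hij hA hB U hiU hjU hUl hIJ]
          have hCD : ((Kloss W U).erase a).erase b = ((Kloss What U).erase i).erase j := by
            apply Finset.ext
            intro k
            simp only [Finset.mem_erase, mem_Kloss]
            constructor
            · rintro ⟨hkb, hka, hkU, hkW⟩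
              obtain ⟨hki, hkj⟩ := hkne k hka hkb
              refine ⟨hkj, hki, hkU, ?_⟩
              rw [hnoij (insert k U)
                (by intro h; rcases Finset.mem_insert.1 h with h' | h'; exacts [hki h'.symm, hiU h'])
                (by intro h; rcases Finset.mem_insert.1 h with h' | h'; exacts [hkj h'.symm, hjU h'])]
              exact hkW
            · rintro ⟨hkj, hki, hkU, hkWhat⟩
              have hka : k ≠ a := by
                rcases hcase with ⟨ha, -⟩ | ⟨ha, -⟩
                · exact ha ▸ hki
                · exact ha ▸ hkj
              have hkb : k ≠ b := by
                rcases hcase with ⟨-, hb⟩ | ⟨-, hb⟩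
                · exact hb ▸ hkj
                · exact hb ▸ hki
              refine ⟨hkb, hka, hkU, ?_⟩
              rw [← hnoij (insert k U)
                (by intro h; rcases Finset.mem_insert.1 h with h' | h'; exacts [hki h'.symm, hiU h'])
                (by intro h; rcases Finset.mem_insert.1 h with h' | h'; exacts [hkj h'.symm, hjU h'])]
              exact hkWhat
          have hIH2 : ∀ k ∈ ((Kloss What U).erase i).erase j,
              alphaMinus W a (insert k U) ≤ alphaMinus What i (insert k U) := by
            intro k hk
            have hkj : k ≠ j := (Finset.mem_erase.1 hk).1
            have hki : k ≠ i := (Finset.mem_erase.1 (Finset.mem_erase.1 hk).2).1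
            obtain ⟨hkU, -⟩ := mem_Kloss.1 (Finset.mem_erase.1 (Finset.mem_erase.1 hk).2).2
            have hcard : (insert k U)ᶜ.card < N := by
              rw [Finset.compl_insert]
              have hkc : k ∈ Uᶜ := Finset.mem_compl.2 hkU
              have := Finset.card_erase_lt_of_mem hkc
              omega
            exact (IH (insert k U) hcard
              (by intro h; rcases Finset.mem_insert.1 h with h' | h'; exacts [hki h'.symm, hiU h'])
              (by intro h; rcases Finset.mem_insert.1 h with h' | h'; exacts [hkj h'.symm, hjU h'])
              a b hcase).1
          by_cases hbW : insert b U ∈ W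
          · -- b not an addition index on the W side
            have hbC : b ∉ (Kloss W U).erase a := by
              intro h
              exact (mem_Kloss.1 (Finset.mem_erase.1 h).2).2 hbW
            have hCW : (Kloss W U).erase a = ((Kloss What U).erase i).erase j := by
              rw [← hCD, Finset.erase_eq_of_notMem hbC]
            rw [hCW]
            have hnum := Finset.sum_le_sum hIH2
            exact div_le_div_of_nonneg_right hnum (by positivity)
          · -- b is an addition index on the W side
            have hbC : b ∈ (Kloss W U).erase a :=
              Finset.mem_erase.2 ⟨Ne.symm hab, mem_Kloss.2 ⟨hbU, hbW⟩⟩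
            have hsplit : ∑ k ∈ (Kloss W U).erase a, alphaMinus W a (insert k U)
                = alphaMinus W a (insert b U)
                  + ∑ k ∈ ((Kloss W U).erase a).erase b, alphaMinus W a (insert k U) :=
              (Finset.add_sum_erase _ _ hbC).symm
            have hcard2 : ((Kloss W U).erase a).card
                = (((Kloss W U).erase a).erase b).card + 1 :=
              (Finset.card_erase_add_one hbC).symm
            rw [hsplit, hcard2, hCD]
            have hcast : (((((Kloss What U).erase i).erase j).card + 1 : ℕ) : ℝ) + 1
                = ((((Kloss What U).erase i).erase j).card : ℝ) + 2 := by
              push_cast; ring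
            rw [hcast]
            apply avg_aux2 hIH2
            · exact Finset.sum_nonneg (fun k _ => alphaMinus_nonneg _ _ _)
            · rw [← alphaMinus_what_avg hW hij hA hB U hiU hjU hUl hIJ]
              exact hH1
  exact ⟨hH2, hH1⟩

lemma swap_fix (S : Finset α) (hiS : i ∉ S) (hjS : j ∉ S) :
    S.image (Equiv.swap i j) = S := by
  have heq : Set.EqOn (Equiv.swap i j : α → α) id S := fun x hx =>
    Equiv.swap_apply_of_ne_of_ne (ne_of_mem_of_not_mem (Finset.mem_coe.1 hx) hiS)
      (ne_of_mem_of_not_mem (Finset.mem_coe.1 hx) hjS)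
  rw [Finset.image_congr heq, Finset.image_id]

include hW hij hA hB in
lemma point_plus_i (S : Finset α) : alphaPlus W i S ≤ alphaPlus What i S := by
  by_cases hiS : i ∈ S
  · by_cases hjS : j ∈ S
    · set U := (S.erase i).erase j with hU
      have hiU : i ∉ U := fun h => Finset.notMem_erase i S (Finset.mem_of_mem_erase h)
      have hjU : j ∉ U := Finset.notMem_erase j _
      have hSeq : S = insert i (insert j U) := by
        rw [hU, Finset.insert_erase (Finset.mem_erase.2 ⟨Ne.symm hij, hjS⟩),
          Finset.insert_erase hiS]
      have hS2 : S = insert j (insert i U) := by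
        rw [hSeq]; exact Finset.insert_comm i j U
      have hd := what_dummy hij hA hB
      have hdp := donation_plus hW hij hA hB (U.card + 1) U (Nat.lt_succ_self _)
        hiU hjU i j (Or.inl ⟨rfl, rfl⟩)
      have hjiU : j ∉ insert i U := by
        intro h
        rcases Finset.mem_insert.1 h with h' | h'
        exacts [hij h'.symm, hjU h']
      have hdummy : alphaPlus What i S = alphaPlus What i (insert i U) := by
        rw [hS2]
        exact alphaPlus_dummy hd hij (insert i U) hjiU
      rw [hdummy]
      calc alphaPlus W i S = alphaPlus W i (insert i (insert j U)) := by rw [← hSeq]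
        _ ≤ _ := hdp.2
    · set U := S.erase i with hU
      have hiU : i ∉ U := Finset.notMem_erase i S
      have hjU : j ∉ U := fun h => hjS (Finset.mem_of_mem_erase h)
      have hSeq : S = insert i U := by rw [hU, Finset.insert_erase hiS]
      rw [hSeq]
      exact (donation_plus hW hij hA hB (U.card + 1) U (Nat.lt_succ_self _)
        hiU hjU i j (Or.inl ⟨rfl, rfl⟩)).1
  · rw [alphaPlus_of_not_mem hiS]
    exact alphaPlus_nonneg _ _ _

include hW hij hA hB in
lemma point_minus_i (S : Finset α) : alphaMinus W i S ≤ alphaMinus What i S := by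
  by_cases hiS : i ∈ S
  · rw [alphaMinus_of_mem hiS]
    exact alphaMinus_nonneg _ _ _
  · by_cases hjS : j ∈ S
    · set U := S.erase j with hU
      have hjU : j ∉ U := Finset.notMem_erase j S
      have hiU : i ∉ U := fun h => hiS (Finset.mem_of_mem_erase h)
      have hSeq : S = insert j U := by rw [hU, Finset.insert_erase hjS]
      have hd := what_dummy hij hA hB
      have hdummy : alphaMinus What i S = alphaMinus What i U := by
        rw [hSeq]
        exact alphaMinus_dummy hd hij Uᶜ.card U le_rfl hjU
      rw [hdummy, hSeq]
      exact (donation_minus hW hij hA hB (Uᶜ.card + 1) U (Nat.lt_succ_self _)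
        hiU hjU i j (Or.inl ⟨rfl, rfl⟩)).2
    · exact (donation_minus hW hij hA hB (Sᶜ.card + 1) S (Nat.lt_succ_self _)
        hiS hjS i j (Or.inl ⟨rfl, rfl⟩)).1

include hW hij hA hB in
lemma point_plus_j (S : Finset α) :
    alphaPlus W j (S.image (Equiv.swap i j)) ≤ alphaPlus What i S := by
  by_cases hiS : i ∈ S
  · by_cases hjS : j ∈ S
    · set U := (S.erase i).erase j with hU
      have hiU : i ∉ U := fun h => Finset.notMem_erase i S (Finset.mem_of_mem_erase h)
      have hjU : j ∉ U := Finset.notMem_erase j _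
      have hSeq : S = insert i (insert j U) := by
        rw [hU, Finset.insert_erase (Finset.mem_erase.2 ⟨Ne.symm hij, hjS⟩),
          Finset.insert_erase hiS]
      have hS2 : S = insert j (insert i U) := by
        rw [hSeq]; exact Finset.insert_comm i j U
      have hσ : S.image (Equiv.swap i j) = S := by
        nth_rewrite 1 [hSeq]
        rw [Finset.image_insert, Finset.image_insert, swap_fix U hiU hjU,
          Equiv.swap_apply_left, Equiv.swap_apply_right]
        exact hS2.symm
      rw [hσ]
      have hd := what_dummy hij hA hB
      have hjiU : j ∉ insert i U := by
        intro h
        rcases Finset.mem_insert.1 h with h' | h'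
        exacts [hij h'.symm, hjU h']
      have hdummy : alphaPlus What i S = alphaPlus What i (insert i U) := by
        rw [hS2]
        exact alphaPlus_dummy hd hij (insert i U) hjiU
      rw [hdummy]
      calc alphaPlus W j S = alphaPlus W j (insert j (insert i U)) := by rw [← hS2]
        _ ≤ _ := (donation_plus hW hij hA hB (U.card + 1) U (Nat.lt_succ_self _)
          hiU hjU j i (Or.inr ⟨rfl, rfl⟩)).2
    · set U := S.erase i with hU
      have hiU : i ∉ U := Finset.notMem_erase i S
      have hjU : j ∉ U := fun h => hjS (Finset.mem_of_mem_erase h)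
      have hSeq : S = insert i U := by rw [hU, Finset.insert_erase hiS]
      have hσ : S.image (Equiv.swap i j) = insert j U := by
        nth_rewrite 1 [hSeq]
        rw [Finset.image_insert, swap_fix U hiU hjU, Equiv.swap_apply_left]
      rw [hσ, hSeq]
      exact (donation_plus hW hij hA hB (U.card + 1) U (Nat.lt_succ_self _)
        hiU hjU j i (Or.inr ⟨rfl, rfl⟩)).1
  · have hjσ : j ∉ S.image (Equiv.swap i j) := by
      intro h
      obtain ⟨x, hx, hxe⟩ := Finset.mem_image.1 h
      have hxi : x = i := by
        have := (Equiv.swap i j).injective (a₁ := x) (a₂ := i)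
        exact this (by rw [hxe, Equiv.swap_apply_left])
      exact hiS (hxi ▸ hx)
    rw [alphaPlus_of_not_mem hjσ]
    exact alphaPlus_nonneg _ _ _

include hW hij hA hB in
lemma point_minus_j (S : Finset α) :
    alphaMinus W j (S.image (Equiv.swap i j)) ≤ alphaMinus What i S := by
  by_cases hiS : i ∈ S
  · have hjσ : j ∈ S.image (Equiv.swap i j) :=
      Finset.mem_image.2 ⟨i, hiS, Equiv.swap_apply_left i j⟩
    rw [alphaMinus_of_mem hjσ]
    exact alphaMinus_nonneg _ _ _
  · by_cases hjS : j ∈ S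
    · set U := S.erase j with hU
      have hjU : j ∉ U := Finset.notMem_erase j S
      have hiU : i ∉ U := fun h => hiS (Finset.mem_of_mem_erase h)
      have hSeq : S = insert j U := by rw [hU, Finset.insert_erase hjS]
      have hσ : S.image (Equiv.swap i j) = insert i U := by
        nth_rewrite 1 [hSeq]
        rw [Finset.image_insert, swap_fix U hiU hjU, Equiv.swap_apply_right]
      have hd := what_dummy hij hA hB
      have hdummy : alphaMinus What i S = alphaMinus What i U := by
        rw [hSeq]
        exact alphaMinus_dummy hd hij Uᶜ.card U le_rfl hjU
      rw [hσ, hdummy]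
      exact (donation_minus hW hij hA hB (Uᶜ.card + 1) U (Nat.lt_succ_self _)
        hiU hjU j i (Or.inr ⟨rfl, rfl⟩)).2
    · rw [swap_fix S hiS hjS]
      exact (donation_minus hW hij hA hB (Sᶜ.card + 1) S (Nat.lt_succ_self _)
        hiS hjS j i (Or.inr ⟨rfl, rfl⟩)).1

end Main

end RMDonationProof

/-- RM satisfies the donation postulate. -/
theorem rm_donation {n : ℕ} (W What : Finset (Finset (Fin n)))
    (hW : SimpleVotingGame W) (i j : Fin n) (hij : i ≠ j)
    (hdon : Donation W What i j) :
    max (RM W i) (RM W j) ≤ RM What i := by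
  classical
  have hA := RMDonationProof.what_of_mem hdon hij
  have hB := RMDonationProof.what_of_not_mem hdon hij
  have hfac : (0:ℝ) ≤ 1 / 2 ^ Fintype.card (Fin n) := by positivity
  have hi : RM W i ≤ RM What i := by
    unfold RM alphaScore
    apply mul_le_mul_of_nonneg_left _ hfac
    apply Finset.sum_le_sum
    intro S _
    exact add_le_add (RMDonationProof.point_plus_i hW hij hA hB S)
      (RMDonationProof.point_minus_i hW hij hA hB S)
  have hj : RM W j ≤ RM What i := by
    unfold RM alphaScore
    apply mul_le_mul_of_nonneg_left _ hfac
    have hinv : Function.Involutive (fun S : Finset (Fin n) => S.image (Equiv.swap i j)) := by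
      intro S
      simp only [Finset.image_image]
      have hcomp : ((Equiv.swap i j : Fin n → Fin n) ∘ (Equiv.swap i j : Fin n → Fin n)) = id := by
        funext x
        simp
      rw [hcomp, Finset.image_id]
    have hre : ∑ S : Finset (Fin n), (alphaPlus W j S + alphaMinus W j S)
        = ∑ S : Finset (Fin n),
          (alphaPlus W j (S.image (Equiv.swap i j)) + alphaMinus W j (S.image (Equiv.swap i j))) :=
      (Equiv.sum_comp (hinv.toPerm _)
        (fun S => alphaPlus W j S + alphaMinus W j S)).symm
    rw [hre]
    apply Finset.sum_le_sum
    intro S _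
    exact add_le_add (RMDonationProof.point_plus_j hW hij hA hB S)
      (RMDonationProof.point_minus_j hW hij hA hB S)
  exact max_le hi hj
end

section
/- Let W be a simple voting game on [n] and let Ŵ be the game obtained by inducing a weak, symmetric quarrel between players i and j, i.e. for every S⊆[n] with i,j∉S: S∪{i,j}∈Ŵ ⟺ (S∪{i}∈W or S∪{j}∈W); S∈Ŵ ⟺ (S∪{i}∈W and S∪{j}∈W); S∪{i}∈Ŵ ⟺ S∪{i}∈W; and S∪{j}∈Ŵ ⟺ S∪{j}∈W. Then Ŵ is monotonic: if S∈Ŵ and S⊆T then T∈Ŵ. -/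
open Finset

variable {α : Type*} [Fintype α] [DecidableEq α]

/-- the game obtained by inducing a quarrel is monotonic. -/
theorem quarrel_monotone {n : ℕ} (W What : Finset (Finset (Fin n)))
    (hW : SimpleVotingGame W) (i j : Fin n) (hij : i ≠ j)
    (hq : Quarrel W What i j) :
    ∀ S T : Finset (Fin n), S ∈ What → S ⊆ T → T ∈ What := by
  obtain ⟨hmono, -, -⟩ := hW
  set Q : Finset (Fin n) → Prop := fun S =>
    (i ∈ S ∧ S.erase j ∈ W) ∨ (j ∈ S ∧ S.erase i ∈ W) ∨
    (i ∉ S ∧ j ∉ S ∧ insert i S ∈ W ∧ insert j S ∈ W) with hQdef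
  have key : ∀ S, S ∈ What ↔ Q S := by
    intro S
    by_cases hi : i ∈ S <;> by_cases hj : j ∈ S
    · set B := (S.erase i).erase j with hB
      have hiB : i ∉ B := by simp [hB, Finset.mem_erase]
      have hjB : j ∉ B := Finset.notMem_erase _ _
      have h1 : insert j B = S.erase i :=
        Finset.insert_erase (Finset.mem_erase.2 ⟨hij.symm, hj⟩)
      have h2 : insert i (insert j B) = S := by rw [h1]; exact Finset.insert_erase hi
      have h3 : insert i B = S.erase j := by
        ext x
        simp only [hB, Finset.mem_insert, Finset.mem_erase]
        constructor
        · rintro (rfl | ⟨hxj, hxi, hxS⟩)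
          · exact ⟨hij, hi⟩
          · exact ⟨hxj, hxS⟩
        · rintro ⟨hxj, hxS⟩
          by_cases hxi : x = i
          · exact Or.inl hxi
          · exact Or.inr ⟨hxj, hxi, hxS⟩
      have := (hq B hiB hjB).1
      rw [h2, h3, h1] at this
      rw [this, hQdef]
      constructor
      · rintro (h | h)
        · exact Or.inl ⟨hi, h⟩
        · exact Or.inr (Or.inl ⟨hj, h⟩)
      · rintro (⟨-, h⟩ | ⟨-, h⟩ | ⟨h, -⟩)
        · exact Or.inl h
        · exact Or.inr h
        · exact absurd hi h
    · have hjB : j ∉ S.erase i := fun h => hj (Finset.mem_of_mem_erase h)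
      have := (hq (S.erase i) (Finset.notMem_erase _ _) hjB).2.2.1
      rw [Finset.insert_erase hi] at this
      have hej : S.erase j = S := Finset.erase_eq_of_notMem hj
      rw [this, hQdef]
      constructor
      · intro h; exact Or.inl ⟨hi, by rwa [hej]⟩
      · rintro (⟨-, h⟩ | ⟨h, -⟩ | ⟨h, -⟩)
        · rwa [hej] at h
        · exact absurd h hj
        · exact absurd hi h
    · have hiB : i ∉ S.erase j := fun h => hi (Finset.mem_of_mem_erase h)
      have := (hq (S.erase j) hiB (Finset.notMem_erase _ _)).2.2.2
      rw [Finset.insert_erase hj] at this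
      have hei : S.erase i = S := Finset.erase_eq_of_notMem hi
      rw [this, hQdef]
      constructor
      · intro h; exact Or.inr (Or.inl ⟨hj, by rwa [hei]⟩)
      · rintro (⟨h, -⟩ | ⟨-, h⟩ | ⟨-, h, -⟩)
        · exact absurd h hi
        · rwa [hei] at h
        · exact absurd hj h
    · have := (hq S hi hj).2.1
      rw [this, hQdef]
      constructor
      · rintro ⟨h1, h2⟩; exact Or.inr (Or.inr ⟨hi, hj, h1, h2⟩)
      · rintro (⟨h, -⟩ | ⟨h, -⟩ | ⟨-, -, h1, h2⟩)
        · exact absurd h hi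
        · exact absurd h hj
        · exact ⟨h1, h2⟩
  have Qmono : ∀ S T : Finset (Fin n), Q S → S ⊆ T → Q T := by
    intro S T hS hST
    rw [hQdef] at *
    rcases hS with ⟨hiS, hW1⟩ | ⟨hjS, hW1⟩ | ⟨hiS, hjS, hW1, hW2⟩
    · exact Or.inl ⟨hST hiS, hmono _ _ hW1 (Finset.erase_subset_erase j hST)⟩
    · exact Or.inr (Or.inl ⟨hST hjS, hmono _ _ hW1 (Finset.erase_subset_erase i hST)⟩)
    · by_cases hiT : i ∈ T
      · refine Or.inl ⟨hiT, hmono _ _ hW1 ?_⟩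
        intro x hx
        rcases Finset.mem_insert.1 hx with rfl | hx
        · exact Finset.mem_erase.2 ⟨hij, hiT⟩
        · exact Finset.mem_erase.2 ⟨fun h => hjS (h ▸ hx), hST hx⟩
      · by_cases hjT : j ∈ T
        · refine Or.inr (Or.inl ⟨hjT, hmono _ _ hW2 ?_⟩)
          intro x hx
          rcases Finset.mem_insert.1 hx with rfl | hx
          · exact Finset.mem_erase.2 ⟨hij.symm, hjT⟩
          · exact Finset.mem_erase.2 ⟨fun h => hiS (h ▸ hx), hST hx⟩
        · exact Or.inr (Or.inr ⟨hiT, hjT,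
            hmono _ _ hW1 (Finset.insert_subset_insert _ hST),
            hmono _ _ hW2 (Finset.insert_subset_insert _ hST)⟩)
  intro S T hS hST
  rw [key] at hS ⊢
  exact Qmono S T hS hST
end

section
/- Let W be a simple voting game on [n] and let Ŵ be the game obtained by inducing a quarrel between players i and j. Then for every S⊆[n] with i,j∉S, the YES-efficacy scores of player i satisfy: α̂⁺_i(S) = α⁺_i(S); α̂⁺_i(S∪{j}) = α⁺_i(S∪{j}); α̂⁺_i(S∪{i}) ≤ α⁺_i(S∪{i}); and α̂⁺_i(S∪{i,j}) ≤ α⁺_i(S∪{i,j}), where α̂ denotes efficacy scores computed in Ŵ and α those computed in W. -/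
open Finset

variable {α : Type*} [Fintype α] [DecidableEq α]

section Aux

lemma LCwin_mem' {W : Finset (Finset α)} {S U : Finset α} :
    U ∈ LCwin W S ↔ (∃ k ∈ S, S.erase k = U) ∧ U ∈ W := by
  simp [LCwin]

lemma alphaPlus_nonneg (W : Finset (Finset α)) (i : α) (S : Finset α) :
    0 ≤ alphaPlus W i S := by
  induction S using Finset.strongInduction with
  | _ S ih =>
    rw [alphaPlus]
    split
    · exact zero_le_one
    split
    · exact le_refl 0
    · apply div_nonneg _ (Nat.cast_nonneg _)
      refine Finset.sum_nonneg fun T _ => ?_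
      obtain ⟨⟨k, hk, hke⟩, -⟩ := LCwin_mem'.1 T.2
      exact ih T.1 (hke ▸ Finset.erase_ssubset hk)

lemma alphaPlus_le_one (W : Finset (Finset α)) (i : α) (S : Finset α) :
    alphaPlus W i S ≤ 1 := by
  induction S using Finset.strongInduction with
  | _ S ih =>
    rw [alphaPlus]
    split
    · exact le_refl 1
    split
    · exact zero_le_one
    · have h : ∑ T ∈ (LCwin W S).attach, alphaPlus W i T.1 ≤ ((LCwin W S).card : ℝ) := by
        calc ∑ T ∈ (LCwin W S).attach, alphaPlus W i T.1
            ≤ ∑ _T ∈ (LCwin W S).attach, (1 : ℝ) := by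
              refine Finset.sum_le_sum fun T _ => ?_
              obtain ⟨⟨k, hk, hke⟩, -⟩ := LCwin_mem'.1 T.2
              exact ih T.1 (hke ▸ Finset.erase_ssubset hk)
          _ = ((LCwin W S).card : ℝ) := by simp
      exact div_le_one_of_le₀ h (Nat.cast_nonneg _)

lemma alphaPlus_of_notMem {W : Finset (Finset α)} {i : α} {S : Finset α} (h : i ∉ S) :
    alphaPlus W i S = 0 := by
  rw [alphaPlus, if_neg (fun hc => h hc.1), if_pos (Or.inr h)]

lemma alphaPlus_of_not_win {W : Finset (Finset α)} {i : α} {S : Finset α} (h : S ∉ W) :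
    alphaPlus W i S = 0 := by
  rw [alphaPlus, if_neg (fun hc => h hc.2.1), if_pos (Or.inl h)]

lemma alphaPlus_of_decisive {W : Finset (Finset α)} {i : α} {S : Finset α}
    (h : i ∈ S ∧ S ∈ W ∧ S.erase i ∉ W) : alphaPlus W i S = 1 := by
  rw [alphaPlus, if_pos h]

lemma mean_le_mean {A B : Finset (Finset α)} {f g : Finset α → ℝ}
    (hAB : A ⊆ B) (hf0 : ∀ U ∈ A, 0 ≤ f U) (hf1 : ∀ U ∈ A, f U ≤ 1)
    (hfg : ∀ U ∈ A, f U ≤ g U) (hg1 : ∀ U ∈ B, U ∉ A → g U = 1) (hB : B.Nonempty) :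
    (∑ U ∈ A, f U) / A.card ≤ (∑ U ∈ B, g U) / B.card := by
  have hcard : (A.card : ℝ) ≤ B.card := by exact_mod_cast Finset.card_le_card hAB
  have hs0 : 0 ≤ ∑ U ∈ A, f U := Finset.sum_nonneg hf0
  have hs1 : ∑ U ∈ A, f U ≤ (A.card : ℝ) := by
    calc ∑ U ∈ A, f U ≤ ∑ _U ∈ A, (1 : ℝ) := Finset.sum_le_sum hf1
      _ = (A.card : ℝ) := by simp
  have hbpos : (0 : ℝ) < B.card := by exact_mod_cast Finset.card_pos.2 hB
  have hBg : (∑ U ∈ A, f U) + ((B.card : ℝ) - A.card) ≤ ∑ U ∈ B, g U := by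
    rw [← Finset.sum_sdiff hAB]
    have h1 : ∑ U ∈ B \ A, g U = ((B.card : ℝ) - A.card) := by
      rw [Finset.sum_congr rfl
        (fun U hU => hg1 U (Finset.mem_sdiff.1 hU).1 (Finset.mem_sdiff.1 hU).2)]
      rw [Finset.sum_const, Finset.card_sdiff_of_subset hAB, nsmul_eq_mul, mul_one,
        Nat.cast_sub (Finset.card_le_card hAB)]
    rw [h1]
    linarith [Finset.sum_le_sum hfg]
  rcases Nat.eq_zero_or_pos A.card with h0 | hpos
  · have hAe : A = ∅ := Finset.card_eq_zero.1 h0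
    subst hAe
    simp only [Finset.sum_empty, Finset.card_empty, Nat.cast_zero, zero_div]
    apply div_nonneg _ hbpos.le
    refine Finset.sum_nonneg fun U hU => ?_
    rw [hg1 U hU (Finset.notMem_empty U)]
    exact zero_le_one
  · have hapos : (0 : ℝ) < A.card := by exact_mod_cast hpos
    rw [div_le_div_iff₀ hapos hbpos]
    nlinarith [mul_nonneg (sub_nonneg.2 hs1) (sub_nonneg.2 hcard)]

variable {W What : Finset (Finset α)} {i j : α}

lemma qBoth (hij : i ≠ j) (hq : Quarrel W What i j) {T : Finset α}
    (hi : i ∈ T) (hj : j ∈ T) :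
    T ∈ What ↔ (T.erase j ∈ W ∨ T.erase i ∈ W) := by
  set S := (T.erase i).erase j with hS
  have hiS : i ∉ S := fun h => Finset.notMem_erase i T (Finset.mem_of_mem_erase h)
  have hjS : j ∉ S := Finset.notMem_erase j _
  have e1 : insert j S = T.erase i := Finset.insert_erase (Finset.mem_erase.2 ⟨hij.symm, hj⟩)
  have e2 : insert i (T.erase i) = T := Finset.insert_erase hi
  have e3 : insert i S = T.erase j := by
    rw [hS, Finset.erase_right_comm]
    exact Finset.insert_erase (Finset.mem_erase.2 ⟨hij, hi⟩)
  have h := (hq S hiS hjS).1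
  rw [e1, e2, e3] at h
  exact h

lemma qNeither (hq : Quarrel W What i j) {T : Finset α}
    (hi : i ∉ T) (hj : j ∉ T) :
    T ∈ What ↔ (insert i T ∈ W ∧ insert j T ∈ W) := (hq T hi hj).2.1

lemma qOnlyI (hq : Quarrel W What i j) {T : Finset α}
    (hi : i ∈ T) (hj : j ∉ T) : T ∈ What ↔ T ∈ W := by
  have hiS : i ∉ T.erase i := Finset.notMem_erase i T
  have hjS : j ∉ T.erase i := fun h => hj (Finset.mem_of_mem_erase h)
  have h := (hq (T.erase i) hiS hjS).2.2.1
  rwa [Finset.insert_erase hi] at h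

lemma qOnlyJ (hq : Quarrel W What i j) {T : Finset α}
    (hi : i ∉ T) (hj : j ∈ T) : T ∈ What ↔ T ∈ W := by
  have hjS : j ∉ T.erase j := Finset.notMem_erase j T
  have hiS : i ∉ T.erase j := fun h => hi (Finset.mem_of_mem_erase h)
  have h := (hq (T.erase j) hiS hjS).2.2.2
  rwa [Finset.insert_erase hj] at h

lemma quarrel_key (hW : SimpleVotingGame W) (hij : i ≠ j)
    (hq : Quarrel W What i j) (T : Finset α) :
    alphaPlus What i T ≤ alphaPlus W i T := by
  obtain ⟨hmono, -, -⟩ := hW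
  induction T using Finset.strongInduction with
  | _ T ih =>
  by_cases hi : i ∈ T
  swap
  · rw [alphaPlus_of_notMem hi, alphaPlus_of_notMem hi]
  by_cases hwh : T ∈ What
  swap
  · rw [alphaPlus_of_not_win hwh]
    exact alphaPlus_nonneg W i T
  by_cases hdh : T.erase i ∈ What
  swap
  · -- i is decisive in What; show i decisive in W
    have hdec : i ∈ T ∧ T ∈ W ∧ T.erase i ∉ W := by
      by_cases hj : j ∈ T
      · have hjE : j ∈ T.erase i := Finset.mem_erase.2 ⟨hij.symm, hj⟩
        have hTiw : T.erase i ∉ W := by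
          rw [← qOnlyJ hq (Finset.notMem_erase i T) hjE]
          exact hdh
        rcases (qBoth hij hq hi hj).1 hwh with h | h
        · exact ⟨hi, hmono _ _ h (Finset.erase_subset _ _), hTiw⟩
        · exact absurd h hTiw
      · have hTw : T ∈ W := (qOnlyI hq hi hj).1 hwh
        have hTiw : T.erase i ∉ W := by
          intro hc
          apply hdh
          rw [qNeither hq (Finset.notMem_erase i T)
            (fun hc2 => hj (Finset.mem_of_mem_erase hc2))]
          constructor
          · rw [Finset.insert_erase hi]; exact hTw
          · exact hmono _ _ hc (Finset.subset_insert _ _)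
        exact ⟨hi, hTw, hTiw⟩
    rw [alphaPlus_of_decisive ⟨hi, hwh, hdh⟩, alphaPlus_of_decisive hdec]
  -- i not decisive in What
  have hTw : T ∈ W := by
    by_cases hj : j ∈ T
    · have h : T.erase i ∈ W := by
        rw [← qOnlyJ hq (Finset.notMem_erase i T) (Finset.mem_erase.2 ⟨hij.symm, hj⟩)]
        exact hdh
      exact hmono _ _ h (Finset.erase_subset _ _)
    · exact (qOnlyI hq hi hj).1 hwh
  by_cases hdw : T.erase i ∈ W
  swap
  · rw [alphaPlus_of_decisive ⟨hi, hTw, hdw⟩]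
    exact alphaPlus_le_one What i T
  -- case 5: compare the means
  conv_lhs => rw [alphaPlus]
  conv_rhs => rw [alphaPlus]
  rw [if_neg (fun h => h.2.2 hdh), if_neg (fun h => h.elim (fun h1 => h1 hwh) (fun h2 => h2 hi)),
      if_neg (fun h => h.2.2 hdw), if_neg (fun h => h.elim (fun h1 => h1 hTw) (fun h2 => h2 hi)),
      Finset.sum_attach, Finset.sum_attach]
  apply mean_le_mean
  · -- LCwin What T ⊆ LCwin W T
    intro U hU
    obtain ⟨⟨k, hk, rfl⟩, hUw⟩ := LCwin_mem'.1 hU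
    refine LCwin_mem'.2 ⟨⟨k, hk, rfl⟩, ?_⟩
    by_cases hki : k = i
    · subst hki; exact hdw
    · have hiU : i ∈ T.erase k := Finset.mem_erase.2 ⟨Ne.symm hki, hi⟩
      by_cases hj : j ∈ T
      · by_cases hkj : k = j
        · have hjk : j ∉ T.erase k := by rw [← hkj]; exact Finset.notMem_erase k T
          exact (qOnlyI hq hiU hjk).1 hUw
        · have hjU : j ∈ T.erase k := Finset.mem_erase.2 ⟨Ne.symm hkj, hj⟩
          rcases (qBoth hij hq hiU hjU).1 hUw with h | h
          · exact hmono _ _ h (Finset.erase_subset _ _)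
          · exact hmono _ _ h (Finset.erase_subset _ _)
      · have hjU : j ∉ T.erase k := fun h => hj (Finset.mem_of_mem_erase h)
        exact (qOnlyI hq hiU hjU).1 hUw
  · intro U hU
    exact alphaPlus_nonneg What i U
  · intro U hU
    exact alphaPlus_le_one What i U
  · intro U hU
    obtain ⟨⟨k, hk, rfl⟩, -⟩ := LCwin_mem'.1 hU
    exact ih _ (Finset.erase_ssubset hk)
  · -- elements of LCwin W T not in LCwin What T have value 1
    intro U hU hUA
    obtain ⟨⟨k, hk, rfl⟩, hUw⟩ := LCwin_mem'.1 hU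
    have hUwh : T.erase k ∉ What := fun h => hUA (LCwin_mem'.2 ⟨⟨k, hk, rfl⟩, h⟩)
    have hki : k ≠ i := by rintro rfl; exact hUwh hdh
    have hiU : i ∈ T.erase k := Finset.mem_erase.2 ⟨Ne.symm hki, hi⟩
    by_cases hj : j ∈ T
    · by_cases hkj : k = j
      · have hjk : j ∉ T.erase k := by rw [← hkj]; exact Finset.notMem_erase k T
        exact absurd ((qOnlyI hq hiU hjk).2 hUw) hUwh
      · have hjU : j ∈ T.erase k := Finset.mem_erase.2 ⟨Ne.symm hkj, hj⟩
        have hni : (T.erase k).erase i ∉ W := by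
          intro hc
          exact hUwh ((qBoth hij hq hiU hjU).2 (Or.inr hc))
        exact alphaPlus_of_decisive ⟨hiU, hUw, hni⟩
    · have hjU : j ∉ T.erase k := fun h => hj (Finset.mem_of_mem_erase h)
      exact absurd ((qOnlyI hq hiU hjU).2 hUw) hUwh
  · exact ⟨T.erase i, LCwin_mem'.2 ⟨⟨i, hi, rfl⟩, hdw⟩⟩

end Aux

/-- quarrels and YES-efficacy scores. -/
theorem quarrel_alphaPlus {n : ℕ} (W What : Finset (Finset (Fin n)))
    (hW : SimpleVotingGame W) (i j : Fin n) (hij : i ≠ j)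
    (hq : Quarrel W What i j) :
    ∀ S : Finset (Fin n), i ∉ S → j ∉ S →
      alphaPlus What i S = alphaPlus W i S ∧
      alphaPlus What i (insert j S) = alphaPlus W i (insert j S) ∧
      alphaPlus What i (insert i S) ≤ alphaPlus W i (insert i S) ∧
      alphaPlus What i (insert i (insert j S)) ≤ alphaPlus W i (insert i (insert j S)) := by
  intro S hiS hjS
  have hiJS : i ∉ insert j S := by
    simp only [Finset.mem_insert]
    rintro (rfl | h)
    · exact hij rfl
    · exact hiS h
  refine ⟨?_, ?_, quarrel_key hW hij hq _, quarrel_key hW hij hq _⟩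
  · rw [alphaPlus_of_notMem hiS, alphaPlus_of_notMem hiS]
  · rw [alphaPlus_of_notMem hiJS, alphaPlus_of_notMem hiJS]
end

section
/- Let W be a simple voting game on [n] and let G^Y be the game on [n]∪{0} obtained by adding an added YES-blocker 0, with winning coalitions W^Y = { S∪{0} : S∈W }. Then for every player i∈[n] and every S⊆[n]: (B1) α⁺_{i,G^Y}(S∪{0}) = α⁺_{i,W}(S); (B2) α⁺_{i,G^Y}(S) = 0 (for the division of G^Y in which 0 votes NO); and (B3) α⁻_{i,G^Y}(S∪{0}) = α⁻_{i,W}(S). -/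
open Finset

variable {α : Type*} [Fintype α] [DecidableEq α]

namespace AYBaux
variable {n : ℕ}

noncomputable abbrev φ (S : Finset (Fin n)) : Finset (Option (Fin n)) :=
  insert none (S.image some)

lemma φ_inj : Function.Injective (φ (n := n)) := by
  intro A B h
  have hA : none ∉ A.image some := by simp
  have hB : none ∉ B.image some := by simp
  have : A.image some = B.image some := by
    have := congrArg (fun T => Finset.erase T none) h
    simpa [φ, Finset.erase_insert hA, Finset.erase_insert hB] using this
  exact Finset.image_injective (Option.some_injective _) this

variable {W : Finset (Finset (Fin n))} {WY : Finset (Finset (Option (Fin n)))}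

lemma mem_WY (hWY : WY = W.image (fun S => insert none (S.image some)))
    (S : Finset (Fin n)) : φ S ∈ WY ↔ S ∈ W := by
  subst hWY
  constructor
  · rintro h
    rw [Finset.mem_image] at h
    obtain ⟨T, hT, hEq⟩ := h
    rwa [φ_inj hEq] at hT
  · intro h
    exact Finset.mem_image_of_mem _ h

lemma img_not_mem (hWY : WY = W.image (fun S => insert none (S.image some)))
    (S : Finset (Fin n)) : S.image some ∉ WY := by
  subst hWY
  intro h
  rw [Finset.mem_image] at h
  obtain ⟨U, _, hEq⟩ := h
  have : none ∈ S.image some := by rw [← hEq]; simp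
  simp at this

lemma erase_φ (S : Finset (Fin n)) (i : Fin n) :
    (φ S).erase (some i) = φ (S.erase i) := by
  ext x
  cases x <;> simp [φ, Finset.mem_erase]

lemma insert_φ (S : Finset (Fin n)) (j : Fin n) :
    insert (some j) (φ S) = φ (insert j S) := by
  ext x
  cases x <;> simp [φ, or_comm]

lemma LCwin_φ (hWY : WY = W.image (fun S => insert none (S.image some)))
    (S : Finset (Fin n)) : LCwin WY (φ S) = (LCwin W S).image φ := by
  ext T
  simp only [LCwin, Finset.mem_filter, Finset.mem_image]
  constructor
  · rintro ⟨⟨k, hk, rfl⟩, hmem⟩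
    obtain _ | j := k
    · exfalso
      have he : (φ S).erase none = S.image some :=
        Finset.erase_insert (by simp)
      rw [he] at hmem
      exact img_not_mem hWY S hmem
    · have hj : j ∈ S := by simpa [φ] using hk
      rw [erase_φ] at hmem ⊢
      exact ⟨S.erase j, ⟨⟨j, hj, rfl⟩, (mem_WY hWY _).mp hmem⟩, rfl⟩
  · rintro ⟨U, ⟨⟨k, hk, rfl⟩, hU⟩, rfl⟩
    exact ⟨⟨some k, by simp [φ, hk], erase_φ S k⟩, (mem_WY hWY _).mpr hU⟩

lemma LCloss_φ (hWY : WY = W.image (fun S => insert none (S.image some)))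
    (S : Finset (Fin n)) : LCloss WY (φ S) = (LCloss W S).image φ := by
  ext T
  simp only [LCloss, Finset.mem_filter, Finset.mem_image]
  constructor
  · rintro ⟨⟨k, hk, rfl⟩, hmem⟩
    obtain _ | j := k
    · exfalso; simp [φ] at hk
    · have hj : j ∉ S := by simpa [φ] using hk
      rw [insert_φ] at hmem ⊢
      exact ⟨insert j S, ⟨⟨j, by simpa using hj, rfl⟩,
        fun h => hmem ((mem_WY hWY _).mpr h)⟩, rfl⟩
  · rintro ⟨U, ⟨⟨k, hk, rfl⟩, hU⟩, rfl⟩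
    have hk' : k ∉ S := by simpa using hk
    exact ⟨⟨some k, by simp [φ, hk'], insert_φ S k⟩,
      fun h => hU ((mem_WY hWY _).mp h)⟩

lemma alphaPlus_φ (hWY : WY = W.image (fun S => insert none (S.image some)))
    (i : Fin n) (S : Finset (Fin n)) :
    alphaPlus WY (some i) (φ S) = alphaPlus W i S := by
  conv_lhs => rw [alphaPlus]
  conv_rhs => rw [alphaPlus]
  have hmem : some i ∈ φ S ↔ i ∈ S := by simp [φ]
  have hc1 : (some i ∈ φ S ∧ φ S ∈ WY ∧ (φ S).erase (some i) ∉ WY) ↔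
      (i ∈ S ∧ S ∈ W ∧ S.erase i ∉ W) := by
    rw [hmem, mem_WY hWY, erase_φ, mem_WY hWY]
  have hc2 : (φ S ∉ WY ∨ some i ∉ φ S) ↔ (S ∉ W ∨ i ∉ S) := by
    rw [hmem, mem_WY hWY]
  by_cases h1 : i ∈ S ∧ S ∈ W ∧ S.erase i ∉ W
  · rw [if_pos (hc1.mpr h1), if_pos h1]
  · rw [if_neg (fun h => h1 (hc1.mp h)), if_neg h1]
    by_cases h2 : S ∉ W ∨ i ∉ S
    · rw [if_pos (hc2.mpr h2), if_pos h2]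
    · rw [if_neg (fun h => h2 (hc2.mp h)), if_neg h2]
      rw [Finset.sum_attach, Finset.sum_attach, LCwin_φ hWY,
        Finset.sum_image (fun a _ b _ h => φ_inj h),
        Finset.card_image_of_injective _ φ_inj]
      congr 1
      apply Finset.sum_congr rfl
      intro T hT
      exact alphaPlus_φ hWY i T
termination_by S.card
decreasing_by
  simp only [LCwin, Finset.mem_filter, Finset.mem_image] at hT
  obtain ⟨⟨k, hk, rfl⟩, -⟩ := hT
  simpa using Finset.card_erase_lt_of_mem hk

lemma alphaMinus_φ (hWY : WY = W.image (fun S => insert none (S.image some)))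
    (i : Fin n) (S : Finset (Fin n)) :
    alphaMinus WY (some i) (φ S) = alphaMinus W i S := by
  conv_lhs => rw [alphaMinus]
  conv_rhs => rw [alphaMinus]
  have hmem : some i ∈ φ S ↔ i ∈ S := by simp [φ]
  have hc1 : (some i ∉ φ S ∧ φ S ∉ WY ∧ insert (some i) (φ S) ∈ WY) ↔
      (i ∉ S ∧ S ∉ W ∧ insert i S ∈ W) := by
    rw [hmem, mem_WY hWY, insert_φ, mem_WY hWY]
  have hc2 : (φ S ∈ WY ∨ some i ∈ φ S) ↔ (S ∈ W ∨ i ∈ S) := by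
    rw [hmem, mem_WY hWY]
  by_cases h1 : i ∉ S ∧ S ∉ W ∧ insert i S ∈ W
  · rw [if_pos (hc1.mpr h1), if_pos h1]
  · rw [if_neg (fun h => h1 (hc1.mp h)), if_neg h1]
    by_cases h2 : S ∈ W ∨ i ∈ S
    · rw [if_pos (hc2.mpr h2), if_pos h2]
    · rw [if_neg (fun h => h2 (hc2.mp h)), if_neg h2]
      rw [Finset.sum_attach, Finset.sum_attach, LCloss_φ hWY,
        Finset.sum_image (fun a _ b _ h => φ_inj h),
        Finset.card_image_of_injective _ φ_inj]
      congr 1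
      apply Finset.sum_congr rfl
      intro T hT
      exact alphaMinus_φ hWY i T
termination_by Sᶜ.card
decreasing_by
  simp only [LCloss, Finset.mem_filter, Finset.mem_image] at hT
  obtain ⟨⟨k, hk, rfl⟩, -⟩ := hT
  rw [Finset.compl_insert]
  exact Finset.card_erase_lt_of_mem hk

end AYBaux

/-- efficacy scores after adding an added YES-blocker `0 = none`. -/
theorem added_yes_blocker_scores {n : ℕ} (W : Finset (Finset (Fin n)))
    (hW : SimpleVotingGame W)
    (WY : Finset (Finset (Option (Fin n))))
    (hWY : WY = W.image (fun S => insert none (S.image some)))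
    (i : Fin n) (S : Finset (Fin n)) :
    alphaPlus WY (some i) (insert none (S.image some)) = alphaPlus W i S ∧
    alphaPlus WY (some i) (S.image some) = 0 ∧
    alphaMinus WY (some i) (insert none (S.image some)) = alphaMinus W i S := by
  refine ⟨AYBaux.alphaPlus_φ hWY i S, ?_, AYBaux.alphaMinus_φ hWY i S⟩
  rw [alphaPlus, if_neg (fun h => AYBaux.img_not_mem hWY S h.2.1),
    if_pos (Or.inl (AYBaux.img_not_mem hWY S))]
end

section
/- Let W be a simple voting game on [n], let G^Y be the game on [n]∪{0} with winning coalitions W^Y = { S∪{0} : S∈W }, and let P be a voting-independent probability distribution on divisions of [n]∪{0}, i.e. P is the product distribution determined by independent vote probabilities p_k∈[0,1] for each player k∈[n]∪{0}. Then for any players i,j∈[n], the generalized Recursive Measures of YES-voting power RM⁺_i(G) = Σ_{S⊆[n]} α⁺_{i,W}(S)·P_{[n]}(S) (where P_{[n]} is the induced product distribution on divisions of [n]) and RM⁺_i(G^Y) = Σ_{T⊆[n]∪{0}} α⁺_{i,G^Y}(T)·P(T) satisfy RM⁺_i(G^Y)·RM⁺_j(G) = RM⁺_i(G)·RM⁺_j(G^Y);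 indeed RM⁺_i(G^Y) = p_0·RM⁺_i(G) for every i∈[n]. -/
open Finset

variable {α : Type*} [Fintype α] [DecidableEq α]

section AuxBlocker

variable {n : ℕ}

/-- Embed a division of `Fin n` as a division of `Option (Fin n)` containing `none`. -/
def toOpt (S : Finset (Fin n)) : Finset (Option (Fin n)) := insert none (S.image some)

/-- The `some`-preimage of a division of `Option (Fin n)`. -/
def toFin (T : Finset (Option (Fin n))) : Finset (Fin n) :=
  univ.filter (fun k => some k ∈ T)

lemma mem_toFin {T : Finset (Option (Fin n))} {k : Fin n} : k ∈ toFin T ↔ some k ∈ T := by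
  simp [toFin]

lemma toOpt_toFin {T : Finset (Option (Fin n))} (h : none ∈ T) : toOpt (toFin T) = T := by
  ext x; cases x <;> simp [toOpt, toFin, h]

lemma toFin_toOpt {S : Finset (Fin n)} : toFin (toOpt S) = S := by
  ext k; simp [toOpt, toFin]

lemma toOpt_injective : Function.Injective (toOpt (n := n)) :=
  Function.LeftInverse.injective (g := toFin) (fun _ => toFin_toOpt)

lemma mem_WY {W : Finset (Finset (Fin n))} {T : Finset (Option (Fin n))} :
    T ∈ W.image (fun S => insert none (S.image some)) ↔ none ∈ T ∧ toFin T ∈ W := by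
  constructor
  · intro h
    simp only [mem_image] at h
    obtain ⟨S, hS, rfl⟩ := h
    refine ⟨mem_insert_self _ _, ?_⟩
    rw [show insert none (S.image some) = toOpt S from rfl, toFin_toOpt]
    exact hS
  · rintro ⟨h1, h2⟩
    simp only [mem_image]
    exact ⟨toFin T, h2, toOpt_toFin h1⟩

lemma toFin_erase {T : Finset (Option (Fin n))} {j : Fin n} :
    toFin (T.erase (some j)) = (toFin T).erase j := by
  ext k; simp [toFin, mem_erase, and_comm]

lemma toOpt_erase {S : Finset (Fin n)} {j : Fin n} :
    toOpt (S.erase j) = (toOpt S).erase (some j) := by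
  ext x; cases x <;> simp [toOpt, and_comm]

lemma LCwin_ssubset {β : Type*} [DecidableEq β] {W : Finset (Finset β)} {T X : Finset β}
    (h : X ∈ LCwin W T) : X ⊂ T := by
  simp only [LCwin, mem_filter, mem_image] at h
  obtain ⟨⟨k, hk, rfl⟩, -⟩ := h
  exact erase_ssubset hk

lemma LCwin_WY (W : Finset (Finset (Fin n))) {T : Finset (Option (Fin n))} (hT : none ∈ T) :
    LCwin (W.image (fun S => insert none (S.image some))) T
      = (LCwin W (toFin T)).image toOpt := by
  ext X
  simp only [LCwin, mem_filter]
  rw [mem_WY]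
  constructor
  · rintro ⟨hX1, hn, hpre⟩
    obtain ⟨k, hk, rfl⟩ := mem_image.mp hX1
    match k with
    | none => simp at hn
    | some j =>
      refine mem_image.mpr ⟨(toFin T).erase j, mem_filter.mpr ⟨mem_image.mpr
        ⟨j, mem_toFin.mpr hk, rfl⟩, by rwa [toFin_erase] at hpre⟩, ?_⟩
      rw [← toFin_erase, toOpt_toFin hn]
  · intro hX
    obtain ⟨Y, hY, rfl⟩ := mem_image.mp hX
    obtain ⟨hY1, hY2⟩ := mem_filter.mp hY
    obtain ⟨j, hj, rfl⟩ := mem_image.mp hY1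
    rw [toOpt_erase, toOpt_toFin hT]
    exact ⟨mem_image.mpr ⟨some j, mem_toFin.mp hj, rfl⟩,
      mem_erase.mpr ⟨by simp, hT⟩, by rwa [toFin_erase]⟩

lemma alphaPlus_WY (W : Finset (Finset (Fin n))) (i : Fin n)
    (T : Finset (Option (Fin n))) :
    alphaPlus (W.image (fun S => insert none (S.image some))) (some i) T
      = if none ∈ T then alphaPlus W i (toFin T) else 0 := by
  induction T using Finset.strongInduction with
  | _ T IH =>
    by_cases hn : none ∈ T
    · have hmemT : T ∈ W.image (fun S => insert none (S.image some)) ↔ toFin T ∈ W := by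
        rw [mem_WY]; simp [hn]
      have herase : T.erase (some i) ∈ W.image (fun S => insert none (S.image some))
          ↔ (toFin T).erase i ∈ W := by
        rw [mem_WY, toFin_erase]
        simp [mem_erase, hn]
      have hmem_i : some i ∈ T ↔ i ∈ toFin T := mem_toFin.symm
      have hdec : (some i ∈ T ∧ T ∈ W.image (fun S => insert none (S.image some)) ∧
            T.erase (some i) ∉ W.image (fun S => insert none (S.image some)))
          ↔ (i ∈ toFin T ∧ toFin T ∈ W ∧ (toFin T).erase i ∉ W) := by
        rw [hmem_i, hmemT, herase]
      have hlose : (T ∉ W.image (fun S => insert none (S.image some)) ∨ some i ∉ T)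
          ↔ (toFin T ∉ W ∨ i ∉ toFin T) := by
        rw [hmem_i, hmemT]
      by_cases h1 : i ∈ toFin T ∧ toFin T ∈ W ∧ (toFin T).erase i ∉ W
      · rw [alphaPlus, if_pos (hdec.mpr h1), if_pos hn, alphaPlus, if_pos h1]
      · by_cases h2 : toFin T ∉ W ∨ i ∉ toFin T
        · rw [alphaPlus, if_neg (fun h => h1 (hdec.mp h)), if_pos (hlose.mpr h2),
            if_pos hn, alphaPlus, if_neg h1, if_pos h2]
        · rw [alphaPlus, if_neg (fun h => h1 (hdec.mp h)), if_neg (fun h => h2 (hlose.mp h)),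
            if_pos hn, alphaPlus, if_neg h1, if_neg h2]
          have hLC := LCwin_WY W hn
          congr 1
          · rw [Finset.sum_attach _ (fun X => alphaPlus
                (W.image (fun S => insert none (S.image some))) (some i) X),
              Finset.sum_attach _ (fun X => alphaPlus W i X), hLC,
              Finset.sum_image (fun a _ b _ h => toOpt_injective h)]
            refine Finset.sum_congr rfl fun Y hY => ?_
            have hsub : toOpt Y ⊂ T :=
              LCwin_ssubset (by rw [hLC]; exact mem_image_of_mem _ hY)
            rw [IH (toOpt Y) hsub,
              if_pos (show (none : Option (Fin n)) ∈ toOpt Y by simp [toOpt]), toFin_toOpt]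
          · rw [hLC, Finset.card_image_of_injective _ toOpt_injective]
    · have hTW : T ∉ W.image (fun S => insert none (S.image some)) := by
        rw [mem_WY]; tauto
      rw [alphaPlus, if_neg (by tauto), if_pos (Or.inl hTW), if_neg hn]

lemma prodDist_toOpt (p : Option (Fin n) → ℝ) (S : Finset (Fin n)) :
    prodDist p (toOpt S) = p none * prodDist (fun k => p (some k)) S := by
  unfold prodDist toOpt
  have hc : (insert none (S.image some))ᶜ = Sᶜ.image some := by
    ext x; cases x <;> simp
  rw [prod_insert (by simp), prod_image (by simp), hc, prod_image (by simp)]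
  ring

lemma filter_none_eq_image :
    (univ.filter (fun T : Finset (Option (Fin n)) => none ∈ T)) = univ.image toOpt := by
  ext T
  simp only [mem_filter, mem_univ, true_and, mem_image]
  constructor
  · intro h; exact ⟨toFin T, toOpt_toFin h⟩
  · rintro ⟨S, rfl⟩; simp [toOpt]

end AuxBlocker

/-- an added YES-blocker preserves relative generalized YES-power under any
voting-independent probability distribution; indeed `RM⁺_i(G^Y) = p_0 · RM⁺_i(G)`. -/
theorem added_yes_blocker_prob {n : ℕ} (W : Finset (Finset (Fin n)))
    (hW : SimpleVotingGame W)
    (WY : Finset (Finset (Option (Fin n))))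
    (hWY : WY = W.image (fun S => insert none (S.image some)))
    (p : Option (Fin n) → ℝ) (hp : ∀ k, 0 ≤ p k ∧ p k ≤ 1) :
    (∀ i j : Fin n,
      RMplusP WY p (some i) * RMplusP W (fun k => p (some k)) j =
        RMplusP W (fun k => p (some k)) i * RMplusP WY p (some j)) ∧
    (∀ i : Fin n,
      RMplusP WY p (some i) = p none * RMplusP W (fun k => p (some k)) i) := by
  subst hWY
  have key : ∀ i : Fin n,
      RMplusP (W.image fun S => insert none (S.image some)) p (some i)
        = p none * RMplusP W (fun k => p (some k)) i := by
    intro i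
    unfold RMplusP
    rw [Finset.mul_sum]
    calc ∑ T : Finset (Option (Fin n)),
          alphaPlus (W.image fun S => insert none (S.image some)) (some i) T * prodDist p T
        = ∑ T ∈ univ.filter (fun T : Finset (Option (Fin n)) => none ∈ T),
            alphaPlus W i (toFin T) * prodDist p T := by
          rw [Finset.sum_filter]
          refine Finset.sum_congr rfl fun T _ => ?_
          rw [alphaPlus_WY]
          by_cases hn : none ∈ T <;> simp [hn]
      _ = ∑ S : Finset (Fin n), alphaPlus W i (toFin (toOpt S)) * prodDist p (toOpt S) := by
          rw [filter_none_eq_image, Finset.sum_image (fun a _ b _ h => toOpt_injective h)]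
      _ = ∑ S : Finset (Fin n),
            p none * (alphaPlus W i S * prodDist (fun k => p (some k)) S) := by
          refine Finset.sum_congr rfl fun S _ => ?_
          rw [toFin_toOpt, prodDist_toOpt]
          ring
  exact ⟨fun i j => by rw [key i, key j]; ring, key⟩
end

section
/- Let W be a simple voting game on [n] and let G^N be the game on [n]∪{0} obtained by adding an added NO-blocker 0, with winning coalitions W^N = { S∪{0} : S⊆[n] } ∪ W. Then for every player i∈[n] and every S⊆[n]: α⁺_{i,G^N}(S) = α⁺_{i,W}(S) (for the division of G^N in which 0 votes NO); α⁻_{i,G^N}(S∪{0}) = 0; and α⁻_{i,G^N}(S) = α⁻_{i,W}(S) (for the division of G^N in which 0 votes NO). -/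
open Finset

variable {α : Type*} [Fintype α] [DecidableEq α]

section NoBlockerAux

variable {n : ℕ} {W : Finset (Finset (Fin n))} {WN : Finset (Finset (Option (Fin n)))}

private lemma some_img_mem
    (hWN : WN = (univ : Finset (Finset (Fin n))).image (fun S => insert none (S.image some)) ∪
      W.image (fun S => S.image some)) (S : Finset (Fin n)) :
    S.image some ∈ WN ↔ S ∈ W := by
  subst hWN
  simp only [Finset.mem_union, Finset.mem_image, Finset.mem_univ, true_and]
  constructor
  · rintro (⟨T, hT⟩ | ⟨T, hTW, hT⟩)
    · exfalso
      have : (none : Option (Fin n)) ∈ S.image some := hT ▸ Finset.mem_insert_self _ _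
      simp at this
    · exact (Finset.image_injective (Option.some_injective _) hT) ▸ hTW
  · intro h; exact Or.inr ⟨S, h, rfl⟩

private lemma insert_none_mem
    (hWN : WN = (univ : Finset (Finset (Fin n))).image (fun S => insert none (S.image some)) ∪
      W.image (fun S => S.image some)) (S : Finset (Fin n)) :
    insert none (S.image some) ∈ WN := by
  subst hWN
  simp only [Finset.mem_union, Finset.mem_image, Finset.mem_univ, true_and]
  exact Or.inl ⟨S, rfl⟩

private lemma img_erase (S : Finset (Fin n)) (i : Fin n) :
    (S.image some).erase (some i) = (S.erase i).image some :=
  (Finset.image_erase (Option.some_injective _) S i).symm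

private lemma img_insert (S : Finset (Fin n)) (i : Fin n) :
    insert (some i) (S.image some) = (insert i S).image some :=
  (Finset.image_insert _ _ _).symm

private lemma LCwin_img
    (hWN : WN = (univ : Finset (Finset (Fin n))).image (fun S => insert none (S.image some)) ∪
      W.image (fun S => S.image some)) (S : Finset (Fin n)) :
    LCwin WN (S.image some) = (LCwin W S).image (fun U => U.image some) := by
  ext T
  simp only [LCwin, Finset.mem_filter, Finset.mem_image]
  constructor
  · rintro ⟨⟨k, hk, rfl⟩, hTW⟩
    obtain ⟨j, hj, rfl⟩ := hk
    rw [img_erase] at hTW ⊢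
    exact ⟨S.erase j, ⟨⟨j, hj, rfl⟩, (some_img_mem hWN _).1 hTW⟩, rfl⟩
  · rintro ⟨U, ⟨⟨j, hj, rfl⟩, hU⟩, rfl⟩
    exact ⟨⟨some j, ⟨j, hj, rfl⟩, (img_erase S j)⟩,
      (some_img_mem hWN _).2 hU⟩

private lemma LCloss_img
    (hWN : WN = (univ : Finset (Finset (Fin n))).image (fun S => insert none (S.image some)) ∪
      W.image (fun S => S.image some)) (S : Finset (Fin n)) :
    LCloss WN (S.image some) = (LCloss W S).image (fun U => U.image some) := by
  ext T
  simp only [LCloss, Finset.mem_filter, Finset.mem_image, Finset.mem_compl]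
  constructor
  · rintro ⟨⟨k, hk, rfl⟩, hTW⟩
    match k with
    | none => exact absurd (insert_none_mem hWN S) hTW
    | some j =>
      have hjS : j ∉ S := fun h => hk ⟨j, h, rfl⟩
      rw [img_insert] at hTW ⊢
      exact ⟨insert j S, ⟨⟨j, hjS, rfl⟩, fun h => hTW ((some_img_mem hWN _).2 h)⟩, rfl⟩
  · rintro ⟨U, ⟨⟨j, hj, rfl⟩, hU⟩, rfl⟩
    exact ⟨⟨some j, fun ⟨a, ha, hae⟩ => hj (Option.some_injective _ hae ▸ ha), img_insert S j⟩,
      fun h => hU ((some_img_mem hWN _).1 h)⟩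

private lemma alphaPlus_img
    (hWN : WN = (univ : Finset (Finset (Fin n))).image (fun S => insert none (S.image some)) ∪
      W.image (fun S => S.image some)) (i : Fin n) (S : Finset (Fin n)) :
    alphaPlus WN (some i) (S.image some) = alphaPlus W i S := by
  have hmem : some i ∈ S.image some ↔ i ∈ S := by simp
  have c1 : (some i ∈ S.image some ∧ S.image some ∈ WN ∧
      (S.image some).erase (some i) ∉ WN) ↔ (i ∈ S ∧ S ∈ W ∧ S.erase i ∉ W) := by
    rw [hmem, some_img_mem hWN, img_erase, some_img_mem hWN]
  have c2 : (S.image some ∉ WN ∨ some i ∉ S.image some) ↔ (S ∉ W ∨ i ∉ S) := by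
    rw [hmem, some_img_mem hWN]
  have hLC := LCwin_img hWN S
  have hcard : (LCwin WN (S.image some)).card = (LCwin W S).card := by
    rw [hLC, Finset.card_image_of_injective _ (Finset.image_injective (Option.some_injective _))]
  have hsum : ∑ T ∈ (LCwin WN (S.image some)).attach, alphaPlus WN (some i) T.1
      = ∑ T ∈ (LCwin W S).attach, alphaPlus W i T.1 := by
    rw [Finset.sum_attach, Finset.sum_attach, hLC,
      Finset.sum_image (fun a _ b _ h => Finset.image_injective (Option.some_injective _) h)]
    refine Finset.sum_congr rfl fun U hU => ?_
    exact alphaPlus_img hWN i U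
  rw [alphaPlus, alphaPlus]
  exact if_congr c1 rfl (if_congr c2 rfl (by rw [hsum, hcard]))
termination_by S.card
decreasing_by
  simp only [LCwin, Finset.mem_filter, Finset.mem_image] at hU
  obtain ⟨⟨k, hk, rfl⟩, -⟩ := hU
  simpa using Finset.card_erase_lt_of_mem hk

private lemma alphaMinus_img
    (hWN : WN = (univ : Finset (Finset (Fin n))).image (fun S => insert none (S.image some)) ∪
      W.image (fun S => S.image some)) (i : Fin n) (S : Finset (Fin n)) :
    alphaMinus WN (some i) (S.image some) = alphaMinus W i S := by
  have hmem : some i ∈ S.image some ↔ i ∈ S := by simp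
  have c1 : (some i ∉ S.image some ∧ S.image some ∉ WN ∧
      insert (some i) (S.image some) ∈ WN) ↔ (i ∉ S ∧ S ∉ W ∧ insert i S ∈ W) := by
    rw [hmem, some_img_mem hWN, img_insert, some_img_mem hWN]
  have c2 : (S.image some ∈ WN ∨ some i ∈ S.image some) ↔ (S ∈ W ∨ i ∈ S) := by
    rw [hmem, some_img_mem hWN]
  have hLC := LCloss_img hWN S
  have hcard : (LCloss WN (S.image some)).card = (LCloss W S).card := by
    rw [hLC, Finset.card_image_of_injective _ (Finset.image_injective (Option.some_injective _))]
  have hsum : ∑ T ∈ (LCloss WN (S.image some)).attach, alphaMinus WN (some i) T.1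
      = ∑ T ∈ (LCloss W S).attach, alphaMinus W i T.1 := by
    rw [Finset.sum_attach, Finset.sum_attach, hLC,
      Finset.sum_image (fun a _ b _ h => Finset.image_injective (Option.some_injective _) h)]
    refine Finset.sum_congr rfl fun U hU => ?_
    exact alphaMinus_img hWN i U
  rw [alphaMinus, alphaMinus]
  exact if_congr c1 rfl (if_congr c2 rfl (by rw [hsum, hcard]))
termination_by Sᶜ.card
decreasing_by
  simp only [LCloss, Finset.mem_filter, Finset.mem_image, Finset.mem_compl] at hU
  obtain ⟨⟨k, hk, rfl⟩, -⟩ := hU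
  rw [Finset.compl_insert]
  exact Finset.card_erase_lt_of_mem (Finset.mem_compl.2 hk)

end NoBlockerAux

/-- efficacy scores after adding an added NO-blocker `0 = none`. -/
theorem added_no_blocker_scores {n : ℕ} (W : Finset (Finset (Fin n)))
    (hW : SimpleVotingGame W)
    (WN : Finset (Finset (Option (Fin n))))
    (hWN : WN = (univ : Finset (Finset (Fin n))).image (fun S => insert none (S.image some)) ∪
      W.image (fun S => S.image some))
    (i : Fin n) (S : Finset (Fin n)) :
    alphaPlus WN (some i) (S.image some) = alphaPlus W i S ∧
    alphaMinus WN (some i) (insert none (S.image some)) = 0 ∧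
    alphaMinus WN (some i) (S.image some) = alphaMinus W i S := by
  refine ⟨alphaPlus_img hWN i S, ?_, alphaMinus_img hWN i S⟩
  rw [alphaMinus]
  rw [if_neg (fun h => h.2.1 (insert_none_mem hWN S)),
    if_pos (Or.inl (insert_none_mem hWN S))]
end

section
/- RM satisfies the added blocker postulate under equiprobable divisions: let W be a simple voting game on [n], let G^Y be the game on [n]∪{0} with winning coalitions W^Y = { S∪{0} : S∈W }, and let G^N be the game on [n]∪{0} with winning coalitions W^N = { S∪{0} : S⊆[n] } ∪ W. With RM⁺ and RM⁻ computed with weight 2^{−n} on divisions of [n] for W and weight 2^{−(n+1)} on divisions of [n]∪{0} for G^Y and G^N, for any players i,j∈[n]: (add-1) RM⁺_i(G^Y)·RM⁺_j(G) = RM⁺_i(G)·RM⁺_j(G^Y), and (add-2) RM⁻_i(G^N)·RM⁻_j(G) = RM⁻_i(G)·RM⁻_j(G^N); i.e. the relative measures of YES-voting power are unaffected by an added YES-blocker, and the relative measures of NO-voting power are unaffected by an added NO-blocker. -/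
open Finset

variable {α : Type*} [Fintype α] [DecidableEq α]

namespace RMBlocker

variable {n : ℕ}

/-- Embedding of a division of `Fin n` into `Option (Fin n)` (without the new player). -/
def emb (T : Finset (Fin n)) : Finset (Option (Fin n)) := T.image some

/-- Embedding of a division of `Fin n` into `Option (Fin n)` together with the new player. -/
def embN (T : Finset (Fin n)) : Finset (Option (Fin n)) := insert none (T.image some)

lemma none_notMem_emb (T : Finset (Fin n)) : none ∉ emb T := by simp [emb]

lemma mem_emb {k : Fin n} {T : Finset (Fin n)} : some k ∈ emb T ↔ k ∈ T := by simp [emb]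

lemma mem_embN {k : Fin n} {T : Finset (Fin n)} : some k ∈ embN T ↔ k ∈ T := by simp [embN]

lemma emb_injective : Function.Injective (emb (n := n)) :=
  Finset.image_injective (Option.some_injective _)

lemma embN_erase_none (T : Finset (Fin n)) : (embN T).erase none = emb T :=
  Finset.erase_insert (none_notMem_emb T)

lemma embN_injective : Function.Injective (embN (n := n)) := by
  intro T U h
  apply emb_injective
  rw [← embN_erase_none T, ← embN_erase_none U, h]

lemma embN_erase_some (T : Finset (Fin n)) (k : Fin n) :
    (embN T).erase (some k) = embN (T.erase k) := by
  ext x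
  cases x <;> simp [embN, Finset.mem_erase]

lemma insert_some_emb (T : Finset (Fin n)) (k : Fin n) :
    insert (some k) (emb T) = emb (insert k T) := by
  simp [emb, Finset.image_insert]

lemma exists_emb {S : Finset (Option (Fin n))} (h : none ∉ S) : ∃ T, emb T = S := by
  refine ⟨S.preimage some (Set.injOn_of_injective (Option.some_injective _)), ?_⟩
  rw [emb, Finset.image_preimage]
  refine Finset.filter_true_of_mem ?_
  intro x hx
  cases x with
  | none => exact absurd hx h
  | some j => exact ⟨j, rfl⟩

lemma exists_embN {S : Finset (Option (Fin n))} (h : none ∈ S) : ∃ T, embN T = S := by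
  obtain ⟨T, hT⟩ := exists_emb (S := S.erase none) (Finset.notMem_erase _ _)
  exact ⟨T, by rw [show embN T = insert none (emb T) from rfl, hT, Finset.insert_erase h]⟩

section Lemmas

variable {W : Finset (Finset (Fin n))} {WY WN : Finset (Finset (Option (Fin n)))}

lemma mem_WY (hWY : WY = W.image (fun S => insert none (S.image some)))
    (T : Finset (Fin n)) : embN T ∈ WY ↔ T ∈ W := by
  subst hWY
  simp only [Finset.mem_image]
  constructor
  · rintro ⟨U, hU, h⟩
    rwa [← embN_injective (show embN U = embN T from h)]
  · exact fun h => ⟨T, h, rfl⟩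

lemma notMem_WY (hWY : WY = W.image (fun S => insert none (S.image some)))
    {S : Finset (Option (Fin n))} (h : none ∉ S) : S ∉ WY := by
  subst hWY
  simp only [Finset.mem_image]
  rintro ⟨U, -, rfl⟩
  exact h (Finset.mem_insert_self _ _)

lemma mem_WN_emb
    (hWN : WN = (univ : Finset (Finset (Fin n))).image (fun S => insert none (S.image some)) ∪
      W.image (fun S => S.image some))
    (T : Finset (Fin n)) : emb T ∈ WN ↔ T ∈ W := by
  subst hWN
  simp only [Finset.mem_union, Finset.mem_image]
  constructor
  · rintro (⟨U, -, h⟩ | ⟨U, hU, h⟩)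
    · exact absurd (h ▸ Finset.mem_insert_self none (U.image some)) (none_notMem_emb T)
    · rwa [← emb_injective (show emb U = emb T from h)]
  · exact fun h => Or.inr ⟨T, h, rfl⟩

lemma mem_WN_of_none
    (hWN : WN = (univ : Finset (Finset (Fin n))).image (fun S => insert none (S.image some)) ∪
      W.image (fun S => S.image some))
    {S : Finset (Option (Fin n))} (h : none ∈ S) : S ∈ WN := by
  subst hWN
  obtain ⟨T, rfl⟩ := exists_embN h
  exact Finset.mem_union_left _ (Finset.mem_image_of_mem _ (Finset.mem_univ T))

lemma LCwin_embN (hWY : WY = W.image (fun S => insert none (S.image some)))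
    (T : Finset (Fin n)) : LCwin WY (embN T) = (LCwin W T).image embN := by
  ext S
  simp only [LCwin, Finset.mem_filter, Finset.mem_image]
  constructor
  · rintro ⟨⟨k, hk, rfl⟩, hS⟩
    cases k with
    | none =>
        rw [embN_erase_none] at hS
        exact absurd hS (notMem_WY hWY (none_notMem_emb T))
    | some j =>
        rw [embN_erase_some] at hS
        have hj : j ∈ T := mem_embN.mp hk
        exact ⟨T.erase j, ⟨⟨j, hj, rfl⟩, (mem_WY hWY _).mp hS⟩, (embN_erase_some T j).symm⟩
  · rintro ⟨U, ⟨⟨k, hk, rfl⟩, hU⟩, rfl⟩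
    exact ⟨⟨some k, mem_embN.mpr hk, embN_erase_some T k⟩, (mem_WY hWY _).mpr hU⟩

lemma LCloss_emb
    (hWN : WN = (univ : Finset (Finset (Fin n))).image (fun S => insert none (S.image some)) ∪
      W.image (fun S => S.image some))
    (T : Finset (Fin n)) : LCloss WN (emb T) = (LCloss W T).image emb := by
  ext S
  simp only [LCloss, Finset.mem_filter, Finset.mem_image, Finset.mem_compl]
  constructor
  · rintro ⟨⟨k, hk, rfl⟩, hS⟩
    cases k with
    | none => exact absurd (mem_WN_of_none hWN (Finset.mem_insert_self _ _)) hS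
    | some j =>
        have hj : j ∉ T := fun h => hk (mem_emb.mpr h)
        rw [insert_some_emb] at hS
        exact ⟨insert j T, ⟨⟨j, hj, rfl⟩, fun h => hS ((mem_WN_emb hWN _).mpr h)⟩,
          (insert_some_emb T j).symm⟩
  · rintro ⟨U, ⟨⟨k, hk, rfl⟩, hU⟩, rfl⟩
    exact ⟨⟨some k, fun h => hk (mem_emb.mp h), insert_some_emb T k⟩,
      fun h => hU ((mem_WN_emb hWN _).mp h)⟩

lemma alphaPlus_embN (hWY : WY = W.image (fun S => insert none (S.image some)))
    (i : Fin n) (T : Finset (Fin n)) :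
    alphaPlus WY (some i) (embN T) = alphaPlus W i T := by
  induction T using Finset.strongInduction with
  | _ T IH =>
  have hc1 : (some i ∈ embN T ∧ embN T ∈ WY ∧ (embN T).erase (some i) ∉ WY) ↔
      (i ∈ T ∧ T ∈ W ∧ T.erase i ∉ W) := by
    rw [mem_embN, mem_WY hWY, embN_erase_some, mem_WY hWY]
  have hc2 : (embN T ∉ WY ∨ some i ∉ embN T) ↔ (T ∉ W ∨ i ∉ T) := by
    rw [mem_embN, mem_WY hWY]
  conv_lhs => rw [alphaPlus]
  conv_rhs => rw [alphaPlus]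
  by_cases h1 : i ∈ T ∧ T ∈ W ∧ T.erase i ∉ W
  · rw [if_pos (hc1.mpr h1), if_pos h1]
  · rw [if_neg (fun h => h1 (hc1.mp h)), if_neg h1]
    by_cases h2 : T ∉ W ∨ i ∉ T
    · rw [if_pos (hc2.mpr h2), if_pos h2]
    · rw [if_neg (fun h => h2 (hc2.mp h)), if_neg h2]
      rw [LCwin_embN hWY, Finset.sum_attach, Finset.sum_attach,
        Finset.card_image_of_injective _ embN_injective,
        Finset.sum_image (fun x _ y _ h => embN_injective h)]
      congr 1
      refine Finset.sum_congr rfl fun U hU => ?_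
      simp only [LCwin, Finset.mem_filter, Finset.mem_image] at hU
      obtain ⟨⟨k, hk, rfl⟩, -⟩ := hU
      exact IH _ (Finset.erase_ssubset hk)

lemma alphaMinus_emb (hW : SimpleVotingGame W)
    (hWN : WN = (univ : Finset (Finset (Fin n))).image (fun S => insert none (S.image some)) ∪
      W.image (fun S => S.image some))
    (i : Fin n) :
    ∀ m (T : Finset (Fin n)), Tᶜ.card ≤ m →
      alphaMinus WN (some i) (emb T) = alphaMinus W i T := by
  intro m
  induction m with
  | zero =>
      intro T hT
      have hTu : T = univ := by
        have h0 : Tᶜ = ∅ := Finset.card_eq_zero.mp (Nat.le_zero.mp hT)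
        rwa [Finset.compl_eq_empty_iff] at h0
      subst hTu
      have hiu : i ∈ (univ : Finset (Fin n)) := Finset.mem_univ i
      have hiu' : some i ∈ emb (univ : Finset (Fin n)) := mem_emb.mpr hiu
      conv_lhs => rw [alphaMinus]
      conv_rhs => rw [alphaMinus]
      rw [if_neg (fun h => h.1 hiu'), if_pos (Or.inr hiu'),
        if_neg (fun h => h.1 hiu), if_pos (Or.inr hiu)]
  | succ m IH =>
      intro T hT
      have hc1 : (some i ∉ emb T ∧ emb T ∉ WN ∧ insert (some i) (emb T) ∈ WN) ↔
          (i ∉ T ∧ T ∉ W ∧ insert i T ∈ W) := by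
        rw [mem_emb, mem_WN_emb hWN, insert_some_emb, mem_WN_emb hWN]
      have hc2 : (emb T ∈ WN ∨ some i ∈ emb T) ↔ (T ∈ W ∨ i ∈ T) := by
        rw [mem_emb, mem_WN_emb hWN]
      conv_lhs => rw [alphaMinus]
      conv_rhs => rw [alphaMinus]
      by_cases h1 : i ∉ T ∧ T ∉ W ∧ insert i T ∈ W
      · rw [if_pos (hc1.mpr h1), if_pos h1]
      · rw [if_neg (fun h => h1 (hc1.mp h)), if_neg h1]
        by_cases h2 : T ∈ W ∨ i ∈ T
        · rw [if_pos (hc2.mpr h2), if_pos h2]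
        · rw [if_neg (fun h => h2 (hc2.mp h)), if_neg h2]
          rw [LCloss_emb hWN, Finset.sum_attach, Finset.sum_attach,
            Finset.card_image_of_injective _ emb_injective,
            Finset.sum_image (fun x _ y _ h => emb_injective h)]
          congr 1
          refine Finset.sum_congr rfl fun U hU => ?_
          simp only [LCloss, Finset.mem_filter, Finset.mem_image, Finset.mem_compl] at hU
          obtain ⟨⟨k, hk, rfl⟩, -⟩ := hU
          apply IH
          rw [Finset.compl_insert, Finset.card_erase_of_mem (Finset.mem_compl.mpr hk)]
          omega

lemma alphaPlus_zero (hWY : WY = W.image (fun S => insert none (S.image some)))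
    {S : Finset (Option (Fin n))} (h : none ∉ S) (j : Option (Fin n)) :
    alphaPlus WY j S = 0 := by
  have hS : S ∉ WY := notMem_WY hWY h
  conv_lhs => rw [alphaPlus]
  rw [if_neg (fun hc => hS hc.2.1), if_pos (Or.inl hS)]

lemma alphaMinus_zero
    (hWN : WN = (univ : Finset (Finset (Fin n))).image (fun S => insert none (S.image some)) ∪
      W.image (fun S => S.image some))
    {S : Finset (Option (Fin n))} (h : none ∈ S) (j : Option (Fin n)) :
    alphaMinus WN j S = 0 := by
  have hS : S ∈ WN := mem_WN_of_none hWN h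
  conv_lhs => rw [alphaMinus]
  rw [if_neg (fun hc => hc.2.1 hS), if_pos (Or.inl hS)]

lemma sum_alphaPlus (hWY : WY = W.image (fun S => insert none (S.image some))) (i : Fin n) :
    ∑ S : Finset (Option (Fin n)), alphaPlus WY (some i) S = ∑ T : Finset (Fin n), alphaPlus W i T := by
  rw [← Finset.sum_filter_of_ne (s := univ) (p := fun S => none ∈ S)
    (fun S _ hne => by by_contra h; exact hne (alphaPlus_zero hWY h _))]
  have himg : (univ : Finset (Finset (Option (Fin n)))).filter (fun S => none ∈ S) =
      univ.image embN := by
    ext S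
    simp only [Finset.mem_filter, Finset.mem_univ, true_and, Finset.mem_image]
    constructor
    · intro h
      obtain ⟨T, rfl⟩ := exists_embN h
      exact ⟨T, rfl⟩
    · rintro ⟨T, -, rfl⟩
      exact Finset.mem_insert_self _ _
  rw [himg, Finset.sum_image (fun x _ y _ h => embN_injective h)]
  exact Finset.sum_congr rfl fun T _ => alphaPlus_embN hWY i T

lemma sum_alphaMinus (hW : SimpleVotingGame W)
    (hWN : WN = (univ : Finset (Finset (Fin n))).image (fun S => insert none (S.image some)) ∪
      W.image (fun S => S.image some)) (i : Fin n) :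
    ∑ S : Finset (Option (Fin n)), alphaMinus WN (some i) S =
      ∑ T : Finset (Fin n), alphaMinus W i T := by
  rw [← Finset.sum_filter_of_ne (s := univ) (p := fun S => none ∉ S)
    (fun S _ hne => by by_contra h; exact hne (alphaMinus_zero hWN h _))]
  have himg : (univ : Finset (Finset (Option (Fin n)))).filter (fun S => none ∉ S) =
      univ.image emb := by
    ext S
    simp only [Finset.mem_filter, Finset.mem_univ, true_and, Finset.mem_image]
    constructor
    · intro h
      obtain ⟨T, rfl⟩ := exists_emb h
      exact ⟨T, rfl⟩
    · rintro ⟨T, -, rfl⟩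
      exact none_notMem_emb T
  rw [himg, Finset.sum_image (fun x _ y _ h => emb_injective h)]
  exact Finset.sum_congr rfl fun T _ => alphaMinus_emb hW hWN i Tᶜ.card T le_rfl

end Lemmas

end RMBlocker

/-- RM satisfies the added blocker postulate (add-1) and (add-2)
under equiprobable divisions. -/
theorem rm_added_blocker {n : ℕ} (W : Finset (Finset (Fin n)))
    (hW : SimpleVotingGame W)
    (WY : Finset (Finset (Option (Fin n))))
    (hWY : WY = W.image (fun S => insert none (S.image some)))
    (WN : Finset (Finset (Option (Fin n))))
    (hWN : WN = (univ : Finset (Finset (Fin n))).image (fun S => insert none (S.image some)) ∪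
      W.image (fun S => S.image some)) :
    (∀ i j : Fin n,
      RMplus WY (some i) * RMplus W j = RMplus W i * RMplus WY (some j)) ∧
    (∀ i j : Fin n,
      RMminus WN (some i) * RMminus W j = RMminus W i * RMminus WN (some j)) := by
  constructor
  · intro i j
    have h : ∀ k : Fin n, RMplus WY (some k) = (1 / 2) * RMplus W k := by
      intro k
      unfold RMplus
      rw [RMBlocker.sum_alphaPlus hWY k, Fintype.card_option, Fintype.card_fin]
      rw [pow_succ]
      ring
    rw [h i, h j]
    ring
  · intro i j
    have h : ∀ k : Fin n, RMminus WN (some k) = (1 / 2) * RMminus W k := by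
      intro k
      unfold RMminus
      rw [RMBlocker.sum_alphaMinus hW hWN k, Fintype.card_option, Fintype.card_fin]
      rw [pow_succ]
      ring
    rw [h i, h j]
    ring
end
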